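/- arXiv:1711.10000 — 4 statements merged into one kernel-verified Lean document; each statement's English description precedes it below -/
import Mathlib

section
/- For integers x and y and a nonnegative integer v, the identity sum_{u=0}^{v} C(x-u, u) * C(y-(v-u), v-u) = sum_{u=0}^{v} (-1)^u * C(x+y-v-u, v-u) holds, where C(z,k) denotes the generalized binomial coefficient z(z-1)...(z-k+1)/k! defined for all integers z (possibly negative). -/
open scoped BigOperators

/-- `l` is a partition: weakly decreasing list of positive integers. -/
def IsPartitionList (l : List ℕ) : Prop :=
  l.Pairwise (· ≥ ·) ∧ ∀ x ∈ l, 0 < x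

/-- `l` is a composition: list of positive integers. -/
def IsCompositionList (l : List ℕ) : Prop := ∀ x ∈ l, 0 < x

/-- cell `(i, j)` (row `i` from the top, column `j`, both 0-based) of the skew shape `lam/mu`. -/
def SkewCell (lam mu : List ℕ) (i j : ℕ) : Prop :=
  i < lam.length ∧ mu.getD i 0 ≤ j ∧ j < lam.getD i 0

/-- Semistandard filling of the skew shape `lam/mu` (rows weakly increase left to right,
columns strictly increase top to bottom), with junk value `0` off the shape. -/
def IsSkewSSYT (lam mu : List ℕ) (T : ℕ → ℕ → ℕ) : Prop :=
  (∀ i j, ¬ SkewCell lam mu i j → T i j = 0) ∧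
  (∀ i j, SkewCell lam mu i j → SkewCell lam mu i (j + 1) → T i j ≤ T i (j + 1)) ∧
  (∀ i j, SkewCell lam mu i j → SkewCell lam mu (i + 1) j → T i j < T (i + 1) j)

/-- number of cells of `lam/mu` that `T` fills with the value `v`. -/
def skewContent (lam mu : List ℕ) (T : ℕ → ℕ → ℕ) (v : ℕ) : ℕ :=
  ∑ i ∈ Finset.range lam.length,
    ((Finset.Ico (mu.getD i 0) (lam.getD i 0)).filter fun j => T i j = v).card

/-- The skew Schur function of `lam/mu` as a formal power series in variables `x_0, x_1, …`:
the coefficient of a monomial `m` is the number of semistandard fillings of content `m`. -/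
noncomputable def skewSchur (lam mu : List ℕ) : MvPowerSeries ℕ ℤ :=
  fun m => (Set.ncard {T : ℕ → ℕ → ℕ |
    IsSkewSSYT lam mu T ∧ ∀ v, skewContent lam mu T v = m v} : ℤ)

/-- The Schur function of a partition. -/
noncomputable def schurFn (lam : List ℕ) : MvPowerSeries ℕ ℤ := skewSchur lam []

/-- Outer shape of the ribbon whose row lengths read from top to bottom are `α`. -/
def ribbonOuter (α : List ℕ) : List ℕ :=
  List.ofFn fun i : Fin α.length => (α.drop (i : ℕ)).sum - (α.length - 1 - (i : ℕ))

/-- Inner shape of the ribbon whose row lengths read from top to bottom are `α`. -/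
def ribbonInner (α : List ℕ) : List ℕ :=
  List.ofFn fun i : Fin α.length =>
    (α.drop (i : ℕ)).sum - (α.length - 1 - (i : ℕ)) - α.getD (i : ℕ) 0

/-- The ribbon Schur function of the composition `α`. -/
noncomputable def ribbonSchur (α : List ℕ) : MvPowerSeries ℕ ℤ :=
  skewSchur (ribbonOuter α) (ribbonInner α)

/-- A symmetric function is Schur-positive if it is a finite nonnegative integer
combination of Schur functions of partitions. -/
def SchurPos (f : MvPowerSeries ℕ ℤ) : Prop :=
  ∃ c : List ℕ →₀ ℕ, (∀ μ ∈ c.support, IsPartitionList μ) ∧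
    f = c.sum fun μ n => (n : ℤ) • schurFn μ

/-- Strict Schur-positivity order: `f >_s g`. -/
def SchurGT (f g : MvPowerSeries ℕ ℤ) : Prop := SchurPos (f - g) ∧ f ≠ g

/-- near-concatenation of compositions. -/
def nearConcat (a b : List ℕ) : List ℕ :=
  a.dropLast ++ (a.getLastD 0 + b.headI) :: b.tail

/-- near-concatenation of `k` copies of `b`. -/
def odotPow (b : List ℕ) : ℕ → List ℕ
  | 0 => []
  | k + 1 => nearConcat (odotPow b k) b

/-- composition of compositions `a ∘ b`. -/
def compComp (a b : List ℕ) : List ℕ := (a.map (odotPow b)).flatten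

/-- `M_i` (with `i` 1-based): decrement the first part by one, increment the `i`-th part by one. -/
def Mi (α : List ℕ) (i : ℕ) : List ℕ :=
  (α.set (i - 1) (α.getD (i - 1) 0 + 1)).set 0 (α.headI - 1)

/-- the complete homogeneous symmetric function `h_N`: the sum of all monomials of degree `N`. -/
noncomputable def hN (N : ℕ) : MvPowerSeries ℕ ℤ :=
  fun m => if (∑ v ∈ m.support, m v) = N then 1 else 0

/-- `h_λ = h_{λ_1} ⋯ h_{λ_k}`. -/
noncomputable def hProd (l : List ℕ) : MvPowerSeries ℕ ℤ := (l.map hN).prod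

/-- lexicographic order on partitions (padding with zeros). -/
def LexLt (μ ν : List ℕ) : Prop :=
  ∃ k, (∀ i < k, μ.getD i 0 = ν.getD i 0) ∧ μ.getD k 0 < ν.getD k 0

/-- entrywise union (max) of two partitions. -/
def pUnion (a b : List ℕ) : List ℕ :=
  List.ofFn fun i : Fin (max a.length b.length) => max (a.getD (i : ℕ) 0) (b.getD (i : ℕ) 0)

/-- entrywise intersection (min) of two partitions. -/
def pInter (a b : List ℕ) : List ℕ :=
  List.ofFn fun i : Fin (min a.length b.length) => min (a.getD (i : ℕ) 0) (b.getD (i : ℕ) 0)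

/-- the number of end rows (first and last part) of `γ` equal to `a`. -/
def shortEnds (a : ℕ) (γ : List ℕ) : ℕ :=
  (if γ.headI = a then 1 else 0) + (if γ.getLastD 0 = a then 1 else 0)

/-- cells of the ribbon whose row lengths read from the bottom are `β`;
cells are pairs `(row, column)`, rows counted from the bottom starting at `0`. -/
def ribbonCells (β : List ℕ) : Finset (ℕ × ℕ) :=
  (Finset.range β.length).biUnion fun i =>
    (Finset.Ico ((β.take i).sum - i) ((β.take i).sum - i + β.getD i 0)).image fun j => (i, j)

/-- The box diagonal diagram `P_{R,S}`: cells `(x, y)` (column `x`, row `y` from the bottom,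
both 1-based, with the top-right corner of the cell at the point `(x, y)`) of the `R × S` grid
whose interior or top-left corner point is met by the line `y = (R/S) x`. -/
def boxDiagonal (R S : ℕ) : Finset (ℕ × ℕ) :=
  (Finset.Icc 1 S ×ˢ Finset.Icc 1 R).filter fun c =>
    (R : ℚ) * ((c.1 : ℚ) - 1) ≤ (S : ℚ) * (c.2 : ℚ) ∧
    (S : ℚ) * ((c.2 : ℚ) - 1) < (R : ℚ) * (c.1 : ℚ)

/-- length of row `y` (from the bottom, 1-based) of `P_{R,S}`. -/
def bdRowLen (R S y : ℕ) : ℕ := ((boxDiagonal R S).filter fun c => c.2 = y).card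

/-- length of column `x` (1-based) of `P_{R,S}`. -/
def bdColLen (R S x : ℕ) : ℕ := ((boxDiagonal R S).filter fun c => c.1 = x).card

/-- the set of columns occupied by row `y` of `P_{R,S}`. -/
def bdRowCols (R S y : ℕ) : Finset ℕ :=
  ((boxDiagonal R S).filter fun c => c.2 = y).image Prod.fst

/-- generalized binomial coefficient `C(z, k) = z(z-1)⋯(z-k+1)/k!` for arbitrary integer `z`. -/
def gbinom (z : ℤ) (k : ℕ) : ℚ :=
  (∏ i ∈ Finset.range k, ((z : ℚ) - (i : ℚ))) / (Nat.factorial k : ℚ)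

/-- `f(p) = ∑_{η_1+⋯+η_n = k} ∏_i C(p_i - η_i, η_i)`. -/
def jensenSum (n k : ℕ) (p : Fin n → ℤ) : ℚ :=
  ∑ η ∈ Finset.Nat.antidiagonalTuple n k, ∏ i, gbinom (p i - (η i : ℤ)) (η i)

lemma gbinom_zero (z : ℤ) : gbinom z 0 = 1 := by simp [gbinom]

lemma gbinom_pascal (z : ℤ) (k : ℕ) :
    gbinom z (k+1) = gbinom (z-1) (k+1) + gbinom (z-1) k := by
  unfold gbinom
  rw [Finset.prod_range_succ' (fun i => ((z:ℚ) - i)) k,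
      Finset.prod_range_succ (fun i => (((z-1:ℤ)):ℚ) - i) k]
  have h1 : (fun i : ℕ => ((z:ℚ) - ((i+1 : ℕ) : ℚ))) = fun i : ℕ => (((z-1:ℤ)):ℚ) - i := by
    funext i; push_cast; ring
  simp only [h1]
  set P := ∏ i ∈ Finset.range k, ((((z-1:ℤ)):ℚ) - i) with hP
  have hk : (Nat.factorial k : ℚ) ≠ 0 := by exact_mod_cast (Nat.factorial_ne_zero k)
  have hk1 : (Nat.factorial (k+1) : ℚ) ≠ 0 := by exact_mod_cast (Nat.factorial_ne_zero (k+1))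
  rw [Nat.factorial_succ] at *
  field_simp
  push_cast
  ring

lemma gbinom_natCast (n k : ℕ) : gbinom (n : ℤ) k = (n.choose k : ℚ) := by
  induction n generalizing k with
  | zero =>
    cases k with
    | zero => simp [gbinom]
    | succ k =>
      simp only [gbinom]
      rw [Finset.prod_eq_zero (Finset.mem_range.2 (Nat.succ_pos k))]
      · simp
      · simp
  | succ n ih =>
    cases k with
    | zero => simp [gbinom_zero]
    | succ k =>
      have : ((n+1 : ℕ) : ℤ) - 1 = (n : ℤ) := by push_cast; ring
      rw [gbinom_pascal, this, ih, ih, Nat.choose_succ_succ]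
      push_cast; ring

noncomputable def JL (x y : ℤ) (v : ℕ) : ℚ :=
  ∑ u ∈ Finset.range (v + 1),
    gbinom (x - (u : ℤ)) u * gbinom (y - ((v - u : ℕ) : ℤ)) (v - u)

noncomputable def JR (x y : ℤ) (v : ℕ) : ℚ :=
  ∑ u ∈ Finset.range (v + 1),
    (-1 : ℚ) ^ u * gbinom (x + y - (v : ℤ) - (u : ℤ)) (v - u)

lemma JL_symm (x y : ℤ) (v : ℕ) : JL x y v = JL y x v := by
  unfold JL
  rw [← Finset.sum_range_reflect]
  apply Finset.sum_congr rfl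
  intro u hu
  have hu' : u ≤ v := Nat.lt_succ_iff.mp (Finset.mem_range.mp hu)
  have h1 : v + 1 - 1 - u = v - u := by omega
  have h2 : v - (v - u) = u := by omega
  rw [h1, h2, mul_comm]

lemma JR_symm (x y : ℤ) (v : ℕ) : JR x y v = JR y x v := by
  unfold JR; rw [add_comm x y]

lemma JL_rec (x y : ℤ) (v : ℕ) :
    JL x y (v+1) = JL (x-1) y (v+1) + JL (x-2) y v := by
  unfold JL
  rw [Finset.sum_range_succ' (fun u => gbinom (x - (u : ℤ)) u * gbinom (y - (((v+1) - u : ℕ) : ℤ)) ((v+1) - u)) (v+1),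
      Finset.sum_range_succ' (fun u => gbinom (x - 1 - (u : ℤ)) u * gbinom (y - (((v+1) - u : ℕ) : ℤ)) ((v+1) - u)) (v+1)]
  simp only [Nat.succ_sub_succ, Nat.cast_zero, sub_zero, gbinom_zero, Nat.sub_zero, one_mul]
  have key : ∀ u : ℕ, gbinom (x - ((u+1 : ℕ) : ℤ)) (u+1) * gbinom (y - ((v - u : ℕ) : ℤ)) (v - u)
      = gbinom (x - 1 - ((u+1 : ℕ) : ℤ)) (u+1) * gbinom (y - ((v - u : ℕ) : ℤ)) (v - u)
        + gbinom (x - 2 - (u : ℤ)) u * gbinom (y - ((v - u : ℕ) : ℤ)) (v - u) := by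
    intro u
    have hp := gbinom_pascal (x - ((u+1 : ℕ) : ℤ)) u
    have e1 : x - ((u+1 : ℕ) : ℤ) - 1 = x - 1 - ((u+1 : ℕ) : ℤ) := by push_cast; ring
    have e2 : x - ((u+1 : ℕ) : ℤ) - 1 = x - 2 - (u : ℤ) := by push_cast; ring
    rw [hp]
    nth_rewrite 1 [e1]
    rw [e2, add_mul]
  simp only [key]
  rw [Finset.sum_add_distrib]
  ring

lemma JR_rec (x y : ℤ) (v : ℕ) :
    JR x y (v+1) = JR (x-1) y (v+1) + JR (x-2) y v := by
  unfold JR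
  rw [Finset.sum_range_succ (fun u => (-1:ℚ)^u * gbinom (x + y - ((v+1 : ℕ) : ℤ) - (u : ℤ)) ((v+1) - u)) (v+1),
      Finset.sum_range_succ (fun u => (-1:ℚ)^u * gbinom (x - 1 + y - ((v+1 : ℕ) : ℤ) - (u : ℤ)) ((v+1) - u)) (v+1)]
  simp only [Nat.sub_self, gbinom_zero, mul_one]
  have key : ∀ u ∈ Finset.range (v+1),
      (-1:ℚ)^u * gbinom (x + y - ((v+1 : ℕ) : ℤ) - (u : ℤ)) ((v+1) - u)
      = (-1:ℚ)^u * gbinom (x - 1 + y - ((v+1 : ℕ) : ℤ) - (u : ℤ)) ((v+1) - u)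
        + (-1:ℚ)^u * gbinom (x - 2 + y - (v : ℤ) - (u : ℤ)) (v - u) := by
    intro u hu
    have hu' : u ≤ v := Nat.lt_succ_iff.mp (Finset.mem_range.mp hu)
    have hk : (v+1) - u = (v - u) + 1 := by omega
    have hp := gbinom_pascal (x + y - ((v+1 : ℕ) : ℤ) - (u : ℤ)) (v - u)
    have e1 : x + y - ((v+1 : ℕ) : ℤ) - (u : ℤ) - 1 = x - 1 + y - ((v+1 : ℕ) : ℤ) - (u : ℤ) := by
      push_cast; ring
    have e2 : x + y - ((v+1 : ℕ) : ℤ) - (u : ℤ) - 1 = x - 2 + y - (v : ℤ) - (u : ℤ) := by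
      push_cast; ring
    rw [hk, hp]
    nth_rewrite 1 [e1]
    rw [e2, ← hk, mul_add]
  rw [Finset.sum_congr rfl key, Finset.sum_add_distrib]
  ring

lemma int_const {f : ℤ → ℚ} (h : ∀ x, f x = f (x - 1)) (a b : ℤ) : f a = f b := by
  suffices hs : ∀ x : ℤ, f x = f 0 by rw [hs a, hs b]
  intro x
  induction x using Int.induction_on with
  | zero => rfl
  | succ n ih => rw [h ((n:ℤ)+1)]; simpa using ih
  | pred n ih =>
    have := h (-(n:ℤ))
    show f (-(n:ℤ) - 1) = f 0
    rw [← this, ih]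

lemma jensen_base (m : ℕ) : JL (m : ℤ) (m : ℤ) m = JR (m : ℤ) (m : ℤ) m := by
  unfold JL JR
  have hL : ∀ u ∈ Finset.range (m+1),
      gbinom ((m:ℤ) - (u : ℤ)) u * gbinom ((m:ℤ) - ((m - u : ℕ) : ℤ)) (m - u)
      = if m = 2 * u then (1:ℚ) else 0 := by
    intro u hu
    have hu' : u ≤ m := Nat.lt_succ_iff.mp (Finset.mem_range.mp hu)
    have e1 : (m:ℤ) - (u : ℤ) = ((m - u : ℕ) : ℤ) := by omega
    have e2 : (m:ℤ) - ((m - u : ℕ) : ℤ) = (u : ℤ) := by omega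
    rw [e1, e2, gbinom_natCast, gbinom_natCast]
    rcases lt_trichotomy u (m - u) with h | h | h
    · rw [Nat.choose_eq_zero_of_lt h]
      have : ¬ (m = 2 * u) := by omega
      simp [this]
    · have hm : m = 2 * u := by omega
      rw [← h, Nat.choose_self]
      simp [hm]
    · rw [Nat.choose_eq_zero_of_lt h]
      have : ¬ (m = 2 * u) := by omega
      simp [this]
  have hR : ∀ u ∈ Finset.range (m+1),
      (-1:ℚ)^u * gbinom ((m:ℤ) + (m:ℤ) - (m : ℤ) - (u : ℤ)) (m - u) = (-1:ℚ)^u := by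
    intro u hu
    have hu' : u ≤ m := Nat.lt_succ_iff.mp (Finset.mem_range.mp hu)
    have e1 : (m:ℤ) + (m:ℤ) - (m : ℤ) - (u : ℤ) = ((m - u : ℕ) : ℤ) := by omega
    rw [e1, gbinom_natCast, Nat.choose_self]
    simp
  rw [Finset.sum_congr rfl hL, Finset.sum_congr rfl hR, neg_one_geom_sum]
  rcases Nat.even_or_odd m with ⟨t, ht⟩ | ⟨t, ht⟩
  · have hcond : ∀ u : ℕ, (m = 2 * u) ↔ (u = t) := by intro u; omega
    simp only [hcond]
    rw [Finset.sum_ite_eq' (Finset.range (m+1)) t (fun _ => (1:ℚ))]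
    have : t ∈ Finset.range (m+1) := Finset.mem_range.2 (by omega)
    have hodd : ¬ Even (m+1) := by simp [Nat.even_add_one]; exact ⟨t, by omega⟩
    simp [this, hodd]
  · have hcond : ∀ u : ℕ, ¬ (m = 2 * u) := by intro u; omega
    have heven : Even (m+1) := by refine ⟨t+1, by omega⟩
    simp [hcond, heven]

lemma jensen_main (v : ℕ) : ∀ x y : ℤ, JL x y v = JR x y v := by
  induction v with
  | zero =>
    intro x y
    unfold JL JR
    simp [gbinom_zero]
  | succ v ih =>
    have hx : ∀ x y : ℤ, JL x y (v+1) - JR x y (v+1) = JL (x-1) y (v+1) - JR (x-1) y (v+1) := by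
      intro x y
      rw [JL_rec, JR_rec, ih (x-2) y]
      ring
    have hy : ∀ x y : ℤ, JL x y (v+1) - JR x y (v+1) = JL x (y-1) (v+1) - JR x (y-1) (v+1) := by
      intro x y
      rw [JL_symm x y, JR_symm x y, JL_symm x (y-1), JR_symm x (y-1)]
      exact hx y x
    intro x y
    have h1 : JL x y (v+1) - JR x y (v+1) = JL ((v+1 : ℕ) : ℤ) y (v+1) - JR ((v+1 : ℕ) : ℤ) y (v+1) :=
      int_const (f := fun x => JL x y (v+1) - JR x y (v+1)) (fun x => hx x y) x _
    have h2 : JL ((v+1 : ℕ) : ℤ) y (v+1) - JR ((v+1 : ℕ) : ℤ) y (v+1)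
        = JL ((v+1 : ℕ) : ℤ) ((v+1 : ℕ) : ℤ) (v+1) - JR ((v+1 : ℕ) : ℤ) ((v+1 : ℕ) : ℤ) (v+1) :=
      int_const (f := fun y => JL ((v+1:ℕ):ℤ) y (v+1) - JR ((v+1:ℕ):ℤ) y (v+1)) (fun y => hy _ y) y _
    have h3 := jensen_base (v+1)
    have := h1.trans h2
    push_cast at this h3 ⊢
    linarith [this, h3]


/-- Jensen's identity (specialized at `z = -1`). -/
theorem jensen_identity (x y : ℤ) (v : ℕ) :
    ∑ u ∈ Finset.range (v + 1),
        gbinom (x - (u : ℤ)) u * gbinom (y - ((v - u : ℕ) : ℤ)) (v - u) =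
      ∑ u ∈ Finset.range (v + 1),
        (-1 : ℚ) ^ u * gbinom (x + y - (v : ℤ) - (u : ℤ)) (v - u) := by
  exact jensen_main v x y
end

section
/- Let S >= R >= 1 and write S/R = a - epsilon with a a positive integer and epsilon in [0,1). Then in the box diagonal diagram P_{R,S} (the set of cells of the R x S grid whose interior or top-left corner is met by the line y = (R/S)x from the bottom-left to the top-right corner), counting rows from the bottom: the R-th row has length a, and for 1 <= i <= R-1 the i-th row has length a+1 if i = ceil(t/(1-epsilon)) for some integer t, and length a otherwise. In particular P_{R,S} is a ribbon. -/
open scoped BigOperators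

section BoxDiagonalAux

lemma aux_mem_boxDiagonal {R S x y : ℕ} :
    (x, y) ∈ boxDiagonal R S ↔
      1 ≤ x ∧ x ≤ S ∧ 1 ≤ y ∧ y ≤ R ∧ R * (x - 1) ≤ S * y ∧ S * (y - 1) < R * x := by
  simp only [boxDiagonal, Finset.mem_filter, Finset.mem_product, Finset.mem_Icc]
  constructor
  · rintro ⟨⟨⟨hx1, hxS⟩, hy1, hyR⟩, h1, h2⟩
    refine ⟨hx1, hxS, hy1, hyR, ?_, ?_⟩
    · have : ((R * (x - 1) : ℕ) : ℚ) ≤ ((S * y : ℕ) : ℚ) := by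
        push_cast [Nat.cast_sub hx1]; linarith
      exact_mod_cast this
    · have : ((S * (y - 1) : ℕ) : ℚ) < ((R * x : ℕ) : ℚ) := by
        push_cast [Nat.cast_sub hy1]; linarith
      exact_mod_cast this
  · rintro ⟨hx1, hxS, hy1, hyR, h1, h2⟩
    refine ⟨⟨⟨hx1, hxS⟩, hy1, hyR⟩, ?_, ?_⟩
    · have : ((R * (x - 1) : ℕ) : ℚ) ≤ ((S * y : ℕ) : ℚ) := by exact_mod_cast h1
      rw [Nat.cast_mul, Nat.cast_sub hx1] at this; push_cast at this ⊢; linarith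
    · have : ((S * (y - 1) : ℕ) : ℚ) < ((R * x : ℕ) : ℚ) := by exact_mod_cast h2
      rw [Nat.cast_mul, Nat.cast_sub hy1] at this; push_cast at this ⊢; linarith

lemma aux_row_filter_eq (R S y : ℕ) (hR : 0 < R) (hy : 1 ≤ y) (hyR : y ≤ R) :
    ((boxDiagonal R S).filter fun c => c.2 = y) =
      (Finset.Icc (S * (y - 1) / R + 1) (min (S * y / R + 1) S)).image fun x => (x, y) := by
  ext ⟨x, y'⟩
  simp only [Finset.mem_filter, Finset.mem_image, Finset.mem_Icc, Prod.mk.injEq]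
  constructor
  · rintro ⟨hmem, rfl⟩
    obtain ⟨hx1, hxS, -, -, h1, h2⟩ := aux_mem_boxDiagonal.mp hmem
    refine ⟨x, ⟨?_, le_min ?_ hxS⟩, rfl, rfl⟩
    · have : S * (y' - 1) / R < x := (Nat.div_lt_iff_lt_mul hR).mpr (by rwa [mul_comm x R])
      omega
    · have : x - 1 ≤ S * y' / R := (Nat.le_div_iff_mul_le hR).mpr (by rwa [mul_comm (x-1) R])
      omega
  · rintro ⟨x', ⟨hlo, hhi⟩, rfl, rfl⟩
    have hx1 : 1 ≤ x' := le_trans (Nat.le_add_left 1 _) hlo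
    refine ⟨aux_mem_boxDiagonal.mpr ⟨hx1, le_trans hhi (min_le_right _ _), hy, hyR, ?_, ?_⟩, rfl⟩
    · have h3 : x' - 1 ≤ S * y / R := by
        have := le_trans hhi (min_le_left _ _); omega
      have := (Nat.le_div_iff_mul_le hR).mp h3
      rwa [mul_comm] at this
    · have h4 : S * (y - 1) / R < x' := by omega
      have := (Nat.div_lt_iff_lt_mul hR).mp h4
      rw [mul_comm S (y-1), mul_comm R x']
      linarith [this]

lemma aux_bdRowLen_eq (R S y : ℕ) (hR : 0 < R) (hy : 1 ≤ y) (hyR : y ≤ R) :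
    bdRowLen R S y = min (S * y / R + 1) S - S * (y - 1) / R := by
  rw [bdRowLen, aux_row_filter_eq R S y hR hy hyR,
    Finset.card_image_of_injective _ (fun a b hab => (Prod.mk.injEq _ _ _ _).mp hab |>.1),
    Nat.card_Icc]
  omega

lemma aux_bdRowCols_eq (R S y : ℕ) (hR : 0 < R) (hy : 1 ≤ y) (hyR : y ≤ R) :
    bdRowCols R S y = Finset.Icc (S * (y - 1) / R + 1) (min (S * y / R + 1) S) := by
  rw [bdRowCols, aux_row_filter_eq R S y hR hy hyR, Finset.image_image]
  ext u; simp

lemma aux_ceil_bounds (n R : ℕ) (hR : 0 < R) :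
    n ≤ R * ((n + R - 1) / R) ∧ R * ((n + R - 1) / R) < n + R := by
  have hdm := Nat.div_add_mod (n + R - 1) R
  have hr : (n + R - 1) % R < R := Nat.mod_lt _ hR
  set q := (n + R - 1) / R with hq
  set r := (n + R - 1) % R with hrr
  generalize hK : R * q = K at hdm ⊢
  omega

lemma aux_cdiv_le (e R y : ℕ) (hR : 0 < R) (heR : e < R) : (e * y + R - 1) / R ≤ y := by
  obtain ⟨h1, h2⟩ := aux_ceil_bounds (e * y) R hR
  have hey : e * y ≤ (R - 1) * y := Nat.mul_le_mul_right y (by omega)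
  have : R * ((e * y + R - 1) / R) < R * (y + 1) := by
    calc R * ((e * y + R - 1) / R) < e * y + R := h2
    _ ≤ (R - 1) * y + R := by omega
    _ ≤ R * (y + 1) := by
        have : (R - 1) * y ≤ R * y := Nat.mul_le_mul_right y (by omega)
        linarith
  exact Nat.lt_succ_iff.mp (Nat.lt_of_mul_lt_mul_left this)

lemma aux_div_S (R S a e y : ℕ) (hR : 0 < R) (ha : 1 ≤ a) (hSe : S + e = R * a) (heR : e < R) :
    S * y / R = a * y - (e * y + R - 1) / R := by
  set c := (e * y + R - 1) / R with hc
  obtain ⟨h1, h2⟩ := aux_ceil_bounds (e * y) R hR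
  have hcy : c ≤ y := aux_cdiv_le e R y hR heR
  have hcay : c ≤ a * y := le_trans hcy (Nat.le_mul_of_pos_left y ha)
  have h0 : (S : ℤ) + e = R * a := by exact_mod_cast hSe
  have h1' : ((e : ℤ) * y) ≤ R * c := by exact_mod_cast h1
  have h2' : ((R : ℤ) * c) < e * y + R := by exact_mod_cast h2
  apply Nat.div_eq_of_lt_le
  · have key : ((a : ℤ) * y - c) * R = S * y + e * y - R * c := by
      linear_combination -(y : ℤ) * h0
    zify [hcay]
    linarith [key]
  · have key : ((a : ℤ) * y - c + 1) * R = S * y + e * y + R - R * c := by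
      linear_combination -(y : ℤ) * h0
    zify [hcay]
    linarith [key]

lemma aux_div_S' (R S a e y : ℕ) (hR : 0 < R) (ha : 1 ≤ a) (hSe : S + e = R * a) (heR : e < R) :
    S * y / R + (e * y + R - 1) / R = a * y := by
  rw [aux_div_S R S a e y hR ha hSe heR]
  have hcay : (e * y + R - 1) / R ≤ a * y :=
    le_trans (aux_cdiv_le e R y hR heR) (Nat.le_mul_of_pos_left y ha)
  exact Nat.sub_add_cancel hcay

lemma aux_mul_pred (a b : ℕ) (hb : 1 ≤ b) : a * (b - 1) + a = a * b := by
  conv_rhs => rw [show b = (b - 1) + 1 by omega]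
  rw [Nat.mul_succ]

lemma aux_B_iff (R e i : ℕ) (hR : 0 < R) (heR : e < R) (hi : 1 ≤ i) :
    (∃ t : ℤ, (i : ℤ) = ⌈(t : ℚ) / (1 - (e : ℚ) / R)⌉) ↔
      R * ((e * i + R - 1) / R) < e * (i - 1) + R := by
  obtain ⟨h1, h2⟩ := aux_ceil_bounds (e * i) R hR
  set c := (e * i + R - 1) / R with hc
  have hRQ : (0 : ℚ) < R := by positivity
  have hq : (0 : ℚ) < 1 - (e : ℚ) / R := by
    have : (e : ℚ) / R < 1 := (div_lt_one hRQ).mpr (by exact_mod_cast heR)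
    linarith
  have ceil_char : ∀ t : ℤ, ((i : ℤ) = ⌈(t : ℚ) / (1 - (e : ℚ) / R)⌉) ↔
      ((i : ℤ) - 1) * ((R : ℤ) - e) < t * R ∧ t * R ≤ (i : ℤ) * ((R : ℤ) - e) := by
    intro t
    rw [eq_comm, Int.ceil_eq_iff, lt_div_iff₀ hq, div_le_iff₀ hq,
      ← mul_lt_mul_iff_of_pos_right hRQ, ← mul_le_mul_iff_of_pos_right hRQ]
    have e1 : (((i:ℤ) : ℚ) - 1) * (1 - (e : ℚ) / R) * R = (((i:ℤ) : ℚ) - 1) * ((R : ℚ) - e) := by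
      field_simp
    have e2 : (((i:ℤ) : ℚ)) * (1 - (e : ℚ) / R) * R = (((i:ℤ) : ℚ)) * ((R : ℚ) - e) := by
      field_simp
    rw [e1, e2]
    constructor
    · rintro ⟨hA, hB⟩; exact ⟨by exact_mod_cast hA, by exact_mod_cast hB⟩
    · rintro ⟨hA, hB⟩; exact ⟨by exact_mod_cast hA, by exact_mod_cast hB⟩
  have h1' : (e : ℤ) * i ≤ c * R := by exact_mod_cast (by linarith [h1] : e * i ≤ c * R)
  have h2' : (c : ℤ) * R < e * i + R := by exact_mod_cast (by linarith [h2] : c * R < e * i + R)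
  have hi' : ((i - 1 : ℕ) : ℤ) = (i : ℤ) - 1 := by push_cast [hi]; ring
  constructor
  · rintro ⟨t, ht⟩
    obtain ⟨hA, hB⟩ := (ceil_char t).mp ht
    set m : ℤ := (i : ℤ) - t with hm
    have hm1 : (e : ℤ) * i ≤ m * R := by rw [hm]; nlinarith [hB]
    have hm2 : m * R < (e : ℤ) * ((i : ℤ) - 1) + R := by rw [hm]; nlinarith [hA]
    have hcm : (c : ℤ) ≤ m := by
      by_contra hlt
      push_neg at hlt
      have : m * R ≤ (c - 1) * R := mul_le_mul_of_nonneg_right (by omega) (by positivity)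
      nlinarith
    have : (c : ℤ) * R ≤ m * R := mul_le_mul_of_nonneg_right hcm (by positivity)
    have key : (R : ℤ) * c < e * ((i : ℤ) - 1) + R := by linarith
    have : ((R * c : ℕ) : ℤ) < ((e * (i - 1) + R : ℕ) : ℤ) := by push_cast [hi']; linarith
    exact_mod_cast this
  · intro hlt
    have hlt' : (c : ℤ) * R < (e : ℤ) * ((i : ℤ) - 1) + R := by
      have : ((R * c : ℕ) : ℤ) < ((e * (i - 1) + R : ℕ) : ℤ) := by exact_mod_cast hlt
      push_cast [hi'] at this; linarith
    refine ⟨(i : ℤ) - c, (ceil_char _).mpr ⟨by nlinarith, by nlinarith⟩⟩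

end BoxDiagonalAux

/-- row lengths of the box diagonal diagram `P_{R,S}` for `S ≥ R ≥ 1`,
writing `S/R = a - ε` with `a ≥ 1` and `ε ∈ [0,1)`: the `R`-th row has length `a`, and for
`1 ≤ i ≤ R-1` the `i`-th row has length `a+1` exactly when `i = ⌈t/(1-ε)⌉` for some integer
`t`, and length `a` otherwise.  Moreover `P_{R,S}` is a ribbon: each row is a contiguous
interval of cells and consecutive rows overlap in exactly one column. -/
theorem boxDiagonal_row_lengths (R S a : ℕ) (ε : ℚ) (hR : 1 ≤ R) (hRS : R ≤ S)
    (ha : 1 ≤ a) (hε0 : 0 ≤ ε) (hε1 : ε < 1)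
    (h : (S : ℚ) / (R : ℚ) = (a : ℚ) - ε) :
    bdRowLen R S R = a ∧
    (∀ i, 1 ≤ i → i ≤ R - 1 →
      ((∃ t : ℤ, (i : ℤ) = ⌈(t : ℚ) / (1 - ε)⌉) → bdRowLen R S i = a + 1) ∧
      ((¬ ∃ t : ℤ, (i : ℤ) = ⌈(t : ℚ) / (1 - ε)⌉) → bdRowLen R S i = a)) ∧
    (∀ i x x' x'', 1 ≤ i → i ≤ R → (x, i) ∈ boxDiagonal R S → (x'', i) ∈ boxDiagonal R S →
      x ≤ x' → x' ≤ x'' → (x', i) ∈ boxDiagonal R S) ∧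
    (∀ i, 1 ≤ i → i < R → (bdRowCols R S i ∩ bdRowCols R S (i + 1)).card = 1) := by
  have hR0 : 0 < R := hR
  have hRQ : (0 : ℚ) < R := by exact_mod_cast hR0
  have hRne : (R : ℚ) ≠ 0 := ne_of_gt hRQ
  have hSq : (S : ℚ) = R * a - R * ε := by
    field_simp [hRne] at h
    linear_combination h
  have hSle : S ≤ R * a := by
    have h' : (S : ℚ) ≤ (R : ℚ) * a := by nlinarith [mul_nonneg (le_of_lt hRQ) hε0]
    exact_mod_cast h'
  obtain ⟨e, hSe⟩ : ∃ e, S + e = R * a := ⟨R * a - S, by omega⟩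
  have heq : (e : ℚ) = R * ε := by
    have h' : (S : ℚ) + e = R * a := by exact_mod_cast hSe
    linarith
  have heR : e < R := by
    have h' : (e : ℚ) < R := by nlinarith
    exact_mod_cast h'
  have hεe : (1 : ℚ) - ε = 1 - (e : ℚ) / R := by
    rw [heq]; field_simp
  have hdiv := fun y => aux_div_S' R S a e y hR0 ha hSe heR
  have hcR1 : (e * (R - 1) + R - 1) / R = e := by
    obtain ⟨R', rfl⟩ : ∃ R', R = R' + 1 := ⟨R - 1, by omega⟩
    have hkey : e * (R' + 1 - 1) + (R' + 1) - 1 = e * R' + R' := by simp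
    rw [hkey]
    apply Nat.div_eq_of_lt_le
    · rw [Nat.mul_succ]
      exact Nat.add_le_add_left (by omega) _
    · have hh : (e + 1) * (R' + 1) = e * R' + e + R' + 1 := by ring
      rw [hh]
      linarith
  have hdR1 : S * (R - 1) / R + e = a * (R - 1) := by
    have hh := hdiv (R - 1); rwa [hcR1] at hh
  have hmaR : a * (R - 1) + a = a * R := aux_mul_pred a R hR
  have hSe' : S + e = a * R := by rw [hSe, mul_comm]
  have h9 : S * (R - 1) / R + a = S := by
    obtain ⟨D, hD⟩ : ∃ D, S * (R - 1) / R = D := ⟨_, rfl⟩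
    obtain ⟨A, hA⟩ : ∃ A, a * (R - 1) = A := ⟨_, rfl⟩
    obtain ⟨P, hP⟩ : ∃ P, a * R = P := ⟨_, rfl⟩
    rw [hD] at hdR1 ⊢
    rw [hA] at hdR1 hmaR
    rw [hP] at hmaR hSe'
    omega
  have hUi : ∀ i, i ≤ R - 1 → S * i / R + 1 ≤ S := by
    intro i hi
    have hmono : S * i / R ≤ S * (R - 1) / R :=
      Nat.div_le_div_right (Nat.mul_le_mul_left S hi)
    obtain ⟨D', hD'⟩ : ∃ D, S * i / R = D := ⟨_, rfl⟩
    obtain ⟨D, hD⟩ : ∃ D, S * (R - 1) / R = D := ⟨_, rfl⟩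
    rw [hD', hD] at hmono
    rw [hD'] 
    rw [hD] at h9
    omega
  refine ⟨?_, ?_, ?_, ?_⟩
  · -- row R
    rw [aux_bdRowLen_eq R S R hR0 hR le_rfl, Nat.mul_div_cancel _ hR0,
      min_eq_right (Nat.le_succ S)]
    obtain ⟨D, hD⟩ : ∃ D, S * (R - 1) / R = D := ⟨_, rfl⟩
    rw [hD] at h9 ⊢
    omega
  · -- rows 1..R-1
    intro i hi1 hi2
    have hiR : i ≤ R := by omega
    have hU := hUi i hi2
    have hlen : bdRowLen R S i = S * i / R + 1 - S * (i - 1) / R := by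
      rw [aux_bdRowLen_eq R S i hR0 hi1 hiR, min_eq_left hU]
    have hd1 := hdiv i
    have hd2 := hdiv (i - 1)
    have hm := aux_mul_pred a i hi1
    have hmono : (e * (i - 1) + R - 1) / R ≤ (e * i + R - 1) / R := by
      apply Nat.div_le_div_right
      exact Nat.sub_le_sub_right
        (Nat.add_le_add_right (Nat.mul_le_mul_left e (by omega)) R) 1
    have hstep : (e * i + R - 1) / R ≤ (e * (i - 1) + R - 1) / R + 1 := by
      have hme := aux_mul_pred e i hi1
      have h6 : e * i + R - 1 ≤ (e * (i - 1) + R - 1) + R := by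
        obtain ⟨B1, hB1⟩ : ∃ B, e * i = B := ⟨_, rfl⟩
        obtain ⟨B2, hB2⟩ : ∃ B, e * (i - 1) = B := ⟨_, rfl⟩
        rw [hB1, hB2]
        rw [hB1, hB2] at hme
        omega
      calc (e * i + R - 1) / R ≤ ((e * (i - 1) + R - 1) + R) / R := Nat.div_le_div_right h6
      _ = (e * (i - 1) + R - 1) / R + 1 := Nat.add_div_right _ hR0
    have hB := aux_B_iff R e i hR0 heR hi1
    rw [hεe]
    constructor
    · intro hex
      have hcc : R * ((e * i + R - 1) / R) < e * (i - 1) + R := hB.mp hex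
      have hle : (e * i + R - 1) / R ≤ (e * (i - 1) + R - 1) / R := by
        rw [Nat.le_div_iff_mul_le hR0, mul_comm]
        obtain ⟨C, hC⟩ : ∃ C, R * ((e * i + R - 1) / R) = C := ⟨_, rfl⟩
        obtain ⟨B2, hB2⟩ : ∃ B, e * (i - 1) = B := ⟨_, rfl⟩
        rw [hC, hB2]
        rw [hC, hB2] at hcc
        omega
      rw [hlen]
      obtain ⟨X, hX⟩ : ∃ X, S * i / R = X := ⟨_, rfl⟩
      obtain ⟨X', hX'⟩ : ∃ X, S * (i - 1) / R = X := ⟨_, rfl⟩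
      obtain ⟨C, hC⟩ : ∃ C, (e * i + R - 1) / R = C := ⟨_, rfl⟩
      obtain ⟨C', hC'⟩ : ∃ C, (e * (i - 1) + R - 1) / R = C := ⟨_, rfl⟩
      obtain ⟨K, hK⟩ : ∃ K, a * i = K := ⟨_, rfl⟩
      obtain ⟨A, hA⟩ : ∃ A, a * (i - 1) = A := ⟨_, rfl⟩
      rw [hX, hC, hK] at hd1
      rw [hX', hC', hA] at hd2
      rw [hA, hK] at hm
      rw [hC, hC'] at hle hmono
      rw [hX, hX']
      omega
    · intro hex
      have hcc : e * (i - 1) + R ≤ R * ((e * i + R - 1) / R) := by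
        by_contra hc
        push_neg at hc
        exact hex (hB.mpr hc)
      have hlow : (e * (i - 1) + R - 1) / R * R ≤ e * (i - 1) + R - 1 :=
        Nat.div_mul_le_self _ _
      have hlt : (e * (i - 1) + R - 1) / R < (e * i + R - 1) / R := by
        have hx : (e * (i - 1) + R - 1) / R * R < (e * i + R - 1) / R * R := by
          rw [mul_comm ((e * i + R - 1) / R) R] 
          obtain ⟨C, hC⟩ : ∃ C, R * ((e * i + R - 1) / R) = C := ⟨_, rfl⟩
          obtain ⟨C', hC'⟩ : ∃ C, (e * (i - 1) + R - 1) / R * R = C := ⟨_, rfl⟩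
          obtain ⟨B2, hB2⟩ : ∃ B, e * (i - 1) = B := ⟨_, rfl⟩
          rw [hC', hC]
          rw [hC, hB2] at hcc
          rw [hC', hB2] at hlow
          omega
        exact lt_of_mul_lt_mul_right hx (Nat.zero_le R)
      rw [hlen]
      obtain ⟨X, hX⟩ : ∃ X, S * i / R = X := ⟨_, rfl⟩
      obtain ⟨X', hX'⟩ : ∃ X, S * (i - 1) / R = X := ⟨_, rfl⟩
      obtain ⟨C, hC⟩ : ∃ C, (e * i + R - 1) / R = C := ⟨_, rfl⟩
      obtain ⟨C', hC'⟩ : ∃ C, (e * (i - 1) + R - 1) / R = C := ⟨_, rfl⟩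
      obtain ⟨K, hK⟩ : ∃ K, a * i = K := ⟨_, rfl⟩
      obtain ⟨A, hA⟩ : ∃ A, a * (i - 1) = A := ⟨_, rfl⟩
      rw [hX, hC, hK] at hd1
      rw [hX', hC', hA] at hd2
      rw [hA, hK] at hm
      rw [hC, hC'] at hlt hstep
      rw [hX, hX']
      omega
  · -- contiguity
    intro i x x' x'' hi1 hiR hx hx'' h1 h2
    obtain ⟨ha1, ha2, -, -, ha5, ha6⟩ := aux_mem_boxDiagonal.mp hx
    obtain ⟨hb1, hb2, -, -, hb5, hb6⟩ := aux_mem_boxDiagonal.mp hx''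
    refine aux_mem_boxDiagonal.mpr ⟨by omega, by omega, hi1, hiR, ?_, ?_⟩
    · exact le_trans (Nat.mul_le_mul_left R (by omega)) hb5
    · exact lt_of_lt_of_le ha6 (Nat.mul_le_mul_left R h1)
  · -- overlap
    intro i hi1 hiR
    have hU := hUi i (by omega)
    rw [aux_bdRowCols_eq R S i hR0 hi1 (by omega),
        aux_bdRowCols_eq R S (i + 1) hR0 (by omega) (by omega)]
    have h1 : min (S * i / R + 1) S = S * i / R + 1 := min_eq_left hU
    have hsimp : (i + 1) - 1 = i := by omega
    rw [hsimp, h1, show ∀ a b c d : ℕ, Finset.Icc a b ∩ Finset.Icc c d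
      = Finset.Icc (a ⊔ c) (b ⊓ d) from fun a b c d => by
        ext u; simp only [Finset.mem_inter, Finset.mem_Icc]; omega]
    have hm1 : (S * (i - 1) / R + 1) ⊔ (S * i / R + 1) = S * i / R + 1 := by
      apply sup_eq_right.mpr
      exact Nat.add_le_add_right (Nat.div_le_div_right (Nat.mul_le_mul_left S (by omega))) 1
    have hm2 : (S * i / R + 1) ⊓ (min (S * (i + 1) / R + 1) S) = S * i / R + 1 := by
      apply inf_eq_left.mpr
      exact le_min
        (Nat.add_le_add_right (Nat.div_le_div_right (Nat.mul_le_mul_left S (by omega))) 1) hU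
    rw [hm1, hm2, Finset.Icc_self, Finset.card_singleton]
end

section
/- For any positive integers R and S, the box diagonal diagram P_{R,S} is an equitable ribbon: all its row lengths lie in {a, a+1} for some a >= 1 and all its column lengths lie in {b, b+1} for some b >= 1. -/
open scoped BigOperators

lemma mem_boxDiagonal_iff {R S : ℕ} (x y : ℕ) :
    (x, y) ∈ boxDiagonal R S ↔
      1 ≤ x ∧ x ≤ S ∧ 1 ≤ y ∧ y ≤ R ∧ R * (x - 1) ≤ S * y ∧ S * (y - 1) < R * x := by
  simp only [boxDiagonal, Finset.mem_filter, Finset.mem_product, Finset.mem_Icc]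
  constructor
  · rintro ⟨⟨⟨hx1, hx2⟩, hy1, hy2⟩, h1, h2⟩
    refine ⟨hx1, hx2, hy1, hy2, ?_, ?_⟩
    · rw [show ((x : ℚ) - 1) = ((x - 1 : ℕ) : ℚ) by rw [Nat.cast_sub hx1, Nat.cast_one]] at h1
      exact_mod_cast h1
    · rw [show ((y : ℚ) - 1) = ((y - 1 : ℕ) : ℚ) by rw [Nat.cast_sub hy1, Nat.cast_one]] at h2
      exact_mod_cast h2
  · rintro ⟨hx1, hx2, hy1, hy2, h1, h2⟩
    refine ⟨⟨⟨hx1, hx2⟩, hy1, hy2⟩, ?_, ?_⟩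
    · rw [show ((x : ℚ) - 1) = ((x - 1 : ℕ) : ℚ) by rw [Nat.cast_sub hx1, Nat.cast_one]]
      exact_mod_cast h1
    · rw [show ((y : ℚ) - 1) = ((y - 1 : ℕ) : ℚ) by rw [Nat.cast_sub hy1, Nat.cast_one]]
      exact_mod_cast h2

lemma bd_row_filter {R S : ℕ} (hR : 1 ≤ R) {y : ℕ} (hy1 : 1 ≤ y) (hy2 : y ≤ R) :
    (boxDiagonal R S).filter (fun c => c.2 = y)
      = (Finset.Icc (S * (y - 1) / R + 1) (min (S * y / R + 1) S)).image (fun x => (x, y)) := by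
  have hR0 : 0 < R := hR
  ext ⟨u, v⟩
  simp only [Finset.mem_filter, mem_boxDiagonal_iff, Finset.mem_image, Finset.mem_Icc,
    Prod.mk.injEq]
  constructor
  · rintro ⟨⟨hu1, hu2, _, _, h1, h2⟩, hv⟩
    subst hv
    refine ⟨u, ⟨?_, le_min ?_ hu2⟩, rfl, rfl⟩
    · have h : S * (v - 1) / R < u := by
        rw [Nat.div_lt_iff_lt_mul hR0, mul_comm u R]; exact h2
      omega
    · have h : u - 1 ≤ S * v / R := by
        rw [Nat.le_div_iff_mul_le hR0, mul_comm (u - 1) R]; exact h1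
      omega
  · rintro ⟨w, ⟨hw1, hw2⟩, hwu, hyv⟩
    subst hwu; subst hyv
    have hw2a : w ≤ S * y / R + 1 := le_trans hw2 (min_le_left _ _)
    have hw2b : w ≤ S := le_trans hw2 (min_le_right _ _)
    have hc0 := Nat.zero_le (S * (y - 1) / R)
    have hd0 := Nat.zero_le (S * y / R)
    have e1 : S * (y - 1) / R < w := by omega
    rw [Nat.div_lt_iff_lt_mul hR0, mul_comm w R] at e1
    have e2 : w - 1 ≤ S * y / R := by omega
    rw [Nat.le_div_iff_mul_le hR0, mul_comm (w - 1) R] at e2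
    exact ⟨⟨by omega, hw2b, hy1, hy2, e2, e1⟩, rfl⟩

lemma bdRowLen_eq {R S : ℕ} (hR : 1 ≤ R) {y : ℕ} (hy1 : 1 ≤ y) (hy2 : y ≤ R) :
    bdRowLen R S y = min (S * y / R + 1) S - S * (y - 1) / R := by
  rw [bdRowLen, bd_row_filter hR hy1 hy2,
    Finset.card_image_of_injective _ (fun a b h => by simpa using h), Nat.card_Icc]
  omega

lemma bdRowCols_eq {R S : ℕ} (hR : 1 ≤ R) {y : ℕ} (hy1 : 1 ≤ y) (hy2 : y ≤ R) :
    bdRowCols R S y = Finset.Icc (S * (y - 1) / R + 1) (min (S * y / R + 1) S) := by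
  rw [bdRowCols, bd_row_filter hR hy1 hy2, Finset.image_image]
  ext z
  simp

lemma bd_row_equitable {R S : ℕ} (hR : 1 ≤ R) (hS : 1 ≤ S) :
    ∃ a : ℕ, 1 ≤ a ∧ ∀ y, 1 ≤ y → y ≤ R →
      bdRowLen R S y = a ∨ bdRowLen R S y = a + 1 := by
  have hR0 : 0 < R := hR
  have hqr : R * (S / R) + S % R = S := Nat.div_add_mod S R
  have hrR : S % R < R := Nat.mod_lt S hR0
  refine ⟨S / R + (if S % R = 0 then 0 else 1), ?_, ?_⟩
  · split_ifs with h
    · have hd : R ∣ S := Nat.dvd_of_mod_eq_zero h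
      have h1 := Nat.le_of_dvd hS hd
      have h2 := Nat.div_pos h1 hR0
      omega
    · exact Nat.le_add_left 1 (S / R)
  · intro y hy1 hy2
    rw [bdRowLen_eq hR hy1 hy2]
    rcases eq_or_lt_of_le hy2 with heq | hlt
    · -- last row y = R
      rw [heq]
      rw [Nat.mul_div_cancel _ hR0]
      have hminS : min (S + 1) S = S := by omega
      rw [hminS]
      rcases Nat.eq_zero_or_pos (S % R) with hr0 | hrpos
      · -- R divides S
        have hq1 : 1 ≤ S / R := Nat.div_pos (Nat.le_of_dvd hS (Nat.dvd_of_mod_eq_zero hr0)) hR0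
        have hkey : S * (R - 1) = R * ((S / R) * (R - 1)) := by
          have h' : S = R * (S / R) := by omega
          conv_lhs => rw [h']
          ring
        rw [hkey, Nat.mul_div_cancel_left _ hR0]
        have hmul : (S / R) * (R - 1) + (S / R) = (S / R) * R := by
          have h' : R - 1 + 1 = R := by omega
          calc (S / R) * (R - 1) + (S / R) = (S / R) * ((R - 1) + 1) := by ring
          _ = (S / R) * R := by rw [h']
        have hcm : (S / R) * R = R * (S / R) := mul_comm _ _
        simp only [if_pos hr0]
        generalize (S / R) * (R - 1) = A at *
        generalize (S / R) * R = B at *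
        generalize R * (S / R) = C at *
        generalize S / R = q at *
        omega
      · -- R does not divide S
        have hR2 : 2 ≤ R := by omega
        have h2q : 2 * (S / R) ≤ R * (S / R) := Nat.mul_le_mul_right _ hR2
        have hqS : S / R + 1 ≤ S := by
          generalize R * (S / R) = C at *
          generalize S / R = q at *
          omega
        have hkey : S * (R - 1) = R * (S - S / R - 1) + (R - S % R) := by
          zify [show 1 ≤ S - S / R by generalize S / R = q at *; omega,
            Nat.div_le_self S R, show S % R ≤ R by omega, hR]
          linear_combination Int.mul_ediv_add_emod (S : ℤ) (R : ℤ)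
        rw [hkey, Nat.mul_add_div hR0, Nat.div_eq_of_lt (by omega : R - S % R < R)]
        simp only [if_neg (by omega : ¬ S % R = 0)]
        generalize S / R = q at *
        omega
    · -- y < R
      obtain ⟨n, rfl⟩ : ∃ n, y = n + 1 := ⟨y - 1, by omega⟩
      have hmin : S * (n + 1) / R + 1 ≤ S := by
        have : S * (n + 1) / R < S := by
          rw [Nat.div_lt_iff_lt_mul hR0]
          exact mul_lt_mul_of_pos_left hlt hS
        omega
      have hsplit : S * (n + 1) = S * n + S := by ring
      rw [hsplit, Nat.add_div hR0] at hmin ⊢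
      have hm1 := Nat.mod_lt (S * n) hR0
      simp only [Nat.add_sub_cancel]
      -- generalize all div/mod atoms
      generalize (S * n) / R = p at *
      generalize hE : (S * n) % R = e at *
      generalize S / R = q at *
      generalize S % R = r at *
      split_ifs <;> omega

lemma bd_symm_mem {R S : ℕ} {x y : ℕ} (h : (x, y) ∈ boxDiagonal R S) :
    (R + 1 - y, S + 1 - x) ∈ boxDiagonal S R := by
  rw [mem_boxDiagonal_iff] at h
  rw [mem_boxDiagonal_iff]
  obtain ⟨hx1, hx2, hy1, hy2, h1, h2⟩ := h
  refine ⟨by omega, by omega, by omega, by omega, ?_, ?_⟩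
  · -- S * ((R + 1 - y) - 1) ≤ R * (S + 1 - x)
    zify [show 1 ≤ R + 1 - y by omega, show y ≤ R + 1 by omega, show x ≤ S + 1 by omega,
      hy1, hx1]
    zify [hx1] at h1
    linarith
  · -- R * ((S + 1 - x) - 1) < S * (R + 1 - y)
    zify [show 1 ≤ S + 1 - x by omega, show x ≤ S + 1 by omega, show y ≤ R + 1 by omega,
      hy1, hx1]
    zify [hy1] at h2
    linarith

lemma bdColLen_swap {R S : ℕ} {x : ℕ} (hx1 : 1 ≤ x) (hx2 : x ≤ S) :
    bdColLen R S x = bdRowLen S R (S + 1 - x) := by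
  rw [bdColLen, bdRowLen]
  apply Finset.card_bij' (fun c _ => (R + 1 - c.2, S + 1 - c.1))
    (fun c _ => (S + 1 - c.2, R + 1 - c.1))
  · rintro ⟨u, v⟩ hm
    simp only [Finset.mem_filter] at hm ⊢
    obtain ⟨hmem, huv⟩ := hm
    have h2 := bd_symm_mem hmem
    refine ⟨h2, by omega⟩
  · rintro ⟨u, v⟩ hm
    simp only [Finset.mem_filter] at hm ⊢
    obtain ⟨hmem, huv⟩ := hm
    have h2 := bd_symm_mem hmem
    have hranges := (mem_boxDiagonal_iff u v).mp hmem
    refine ⟨h2, by omega⟩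
  · rintro ⟨u, v⟩ hm
    simp only [Finset.mem_filter] at hm
    have hranges := (mem_boxDiagonal_iff u v).mp hm.1
    simp only [Prod.mk.injEq]
    refine ⟨by omega, by omega⟩
  · rintro ⟨u, v⟩ hm
    simp only [Finset.mem_filter] at hm
    have hranges := (mem_boxDiagonal_iff u v).mp hm.1
    simp only [Prod.mk.injEq]
    refine ⟨by omega, by omega⟩

/-- for any `R, S ≥ 1` the box diagonal diagram `P_{R,S}` is an equitable ribbon:
all row lengths lie in `{a, a+1}` for some `a ≥ 1`, all column lengths lie in `{b, b+1}` for
some `b ≥ 1`, and it is a ribbon (each row contiguous, consecutive rows overlapping in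
exactly one column). -/
theorem boxDiagonal_equitable (R S : ℕ) (hR : 1 ≤ R) (hS : 1 ≤ S) :
    (∃ a : ℕ, 1 ≤ a ∧ ∀ i, 1 ≤ i → i ≤ R →
      bdRowLen R S i = a ∨ bdRowLen R S i = a + 1) ∧
    (∃ b : ℕ, 1 ≤ b ∧ ∀ j, 1 ≤ j → j ≤ S →
      bdColLen R S j = b ∨ bdColLen R S j = b + 1) ∧
    (∀ i x x' x'', 1 ≤ i → i ≤ R → (x, i) ∈ boxDiagonal R S → (x'', i) ∈ boxDiagonal R S →
      x ≤ x' → x' ≤ x'' → (x', i) ∈ boxDiagonal R S) ∧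
    (∀ i, 1 ≤ i → i < R → (bdRowCols R S i ∩ bdRowCols R S (i + 1)).card = 1) := by
  have hR0 : 0 < R := hR
  have hS0 : 0 < S := hS
  refine ⟨bd_row_equitable hR hS, ?_, ?_, ?_⟩
  · obtain ⟨b, hb1, hb⟩ := bd_row_equitable hS hR
    refine ⟨b, hb1, fun j hj1 hj2 => ?_⟩
    rw [bdColLen_swap hj1 hj2]
    exact hb (S + 1 - j) (by omega) (by omega)
  · intro i x x' x'' hi1 hi2 hx hx'' hle1 hle2
    rw [mem_boxDiagonal_iff] at hx hx'' ⊢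
    obtain ⟨ha1, ha2, ha3, ha4, ha5, ha6⟩ := hx
    obtain ⟨hb1, hb2, hb3, hb4, hb5, hb6⟩ := hx''
    have m1 : R * (x' - 1) ≤ R * (x'' - 1) := Nat.mul_le_mul_left R (by omega)
    have m2 : R * x ≤ R * x' := Nat.mul_le_mul_left R hle1
    exact ⟨by omega, by omega, hi1, hi2, by omega, by omega⟩
  · intro i hi1 hi2
    rw [bdRowCols_eq hR hi1 (by omega), bdRowCols_eq hR (by omega) (by omega)]
    simp only [Nat.add_sub_cancel]
    have hmono1 : S * (i - 1) / R ≤ S * i / R :=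
      Nat.div_le_div_right (Nat.mul_le_mul_left S (by omega))
    have hmono2 : S * i / R ≤ S * (i + 1) / R :=
      Nat.div_le_div_right (Nat.mul_le_mul_left S (by omega))
    have hcap : S * i / R + 1 ≤ S := by
      have : S * i / R < S := by
        rw [Nat.div_lt_iff_lt_mul hR0]
        exact mul_lt_mul_of_pos_left hi2 hS0
      omega
    have hcapS : min (S * i / R + 1) S = S * i / R + 1 := min_eq_left hcap
    rw [hcapS]
    have hinter : Finset.Icc (S * (i - 1) / R + 1) (S * i / R + 1) ∩
        Finset.Icc (S * i / R + 1) (min (S * (i + 1) / R + 1) S) = {S * i / R + 1} := by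
      ext z
      simp only [Finset.mem_inter, Finset.mem_Icc, Finset.mem_singleton]
      have h3 : S * i / R + 1 ≤ min (S * (i + 1) / R + 1) S := le_min (by omega) hcap
      omega
    rw [hinter, Finset.card_singleton]
end

section
/- Let f be a nonzero homogeneous symmetric function, and write f = c_lambda h_lambda + sum_{mu >_lex lambda} c_mu h_mu in the complete homogeneous basis with c_lambda nonzero and lambda lexicographically least among partitions appearing. If f is Schur-positive, then c_lambda > 0. -/
open scoped BigOperators

section Aux
open Finset

attribute [local instance 10] Classical.propDecidable

abbrev PF := ℕ →₀ ℕ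

namespace Aux
set_option maxHeartbeats 1000000

/-- weight of a finsupp -/
def wt (φ : PF) : ℕ := φ.sum fun _ n => n

/-- partition (weakly decreasing) -/
def IsPart (φ : PF) : Prop := ∀ i, φ (i + 1) ≤ φ i

/-- `Strip π κ` : `κ/π` is a horizontal strip -/
def Strip (π κ : PF) : Prop := π ≤ κ ∧ ∀ i, κ (i + 1) ≤ π i

/-- number of cells of shape `φ` where `T` has value `v` -/
noncomputable def cnt (φ : PF) (T : ℕ → ℕ → ℕ) (v : ℕ) : ℕ :=
  Set.ncard {p : ℕ × ℕ | p.2 < φ p.1 ∧ T p.1 p.2 = v}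

/-- semistandard tableau of shape `φ` and content `m` -/
def SSY (φ m : PF) (T : ℕ → ℕ → ℕ) : Prop :=
  (∀ i j, ¬ j < φ i → T i j = 0) ∧
  (∀ i j, j + 1 < φ i → T i j ≤ T i (j + 1)) ∧
  (∀ i j, j < φ (i + 1) → T i j < T (i + 1) j) ∧
  ∀ v, cnt φ T v = m v

noncomputable def K (φ m : PF) : ℕ := Set.ncard {T | SSY φ m T}

noncomputable def SchP (φ : PF) : MvPowerSeries ℕ ℤ := fun m => (K φ m : ℤ)

noncomputable def unif (N : ℕ) : PF :=
  Finsupp.onFinset (range N) (fun i => if i < N then N else 0)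
    (by intro i h; simp only [mem_range]; by_contra hc; simp [if_neg hc] at h)

noncomputable def shapes (N : ℕ) : Finset PF :=
  (Finset.Iic (unif N)).filter fun φ => IsPart φ ∧ wt φ = N

noncomputable def peelF (κ : PF) (t : ℕ) : Finset PF :=
  (Finset.Iic κ).filter fun π => IsPart π ∧ Strip π κ ∧ wt π + t = wt κ

noncomputable def stripsF (ν : PF) (r : ℕ) : Finset PF :=
  (shapes (wt ν + r)).filter fun κ => Strip ν κ

/- ---------------- basic weight lemmas ---------------- -/

lemma wt_def (φ : PF) : wt φ = ∑ i ∈ φ.support, φ i := rfl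

lemma wt_eq_sum (φ : PF) {R : Finset ℕ} (h : φ.support ⊆ R) : wt φ = ∑ i ∈ R, φ i :=
  Finsupp.sum_of_support_subset φ h _ (fun _ _ => rfl)

lemma le_wt (φ : PF) (i : ℕ) : φ i ≤ wt φ := by
  by_cases hi : φ i = 0
  · simp [hi]
  · rw [wt_def]
    exact Finset.single_le_sum (f := fun a => φ a) (fun _ _ => Nat.zero_le _)
      (Finsupp.mem_support_iff.mpr hi)

lemma wt_add (a b : PF) : wt (a + b) = wt a + wt b :=
  Finsupp.sum_add_index' (fun _ => rfl) (fun _ _ _ => rfl)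

lemma wt_single (n r : ℕ) : wt (Finsupp.single n r) = r :=
  Finsupp.sum_single_index rfl

lemma wt_erase (m : PF) (n : ℕ) : wt m = wt (m.erase n) + m n := by
  conv_lhs => rw [← Finsupp.erase_add_single n m]
  rw [wt_add, wt_single]

lemma wt_le_of_le {a b : PF} (h : a ≤ b) : wt a ≤ wt b := by
  have h1 := wt_eq_sum a (R := a.support ∪ b.support) Finset.subset_union_left
  have h2 := wt_eq_sum b (R := a.support ∪ b.support) Finset.subset_union_right
  rw [h1, h2]
  exact Finset.sum_le_sum fun i _ => Finsupp.le_def.mp h i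

lemma eq_of_le_of_wt {a b : PF} (h : a ≤ b) (h2 : wt b ≤ wt a) : a = b := by
  by_contra hne
  have hex : ∃ i ∈ a.support ∪ b.support, a i < b i := by
    by_contra hc
    push_neg at hc
    apply hne
    ext i
    by_cases hi : i ∈ a.support ∪ b.support
    · exact le_antisymm (Finsupp.le_def.mp h i) (hc i hi)
    · simp only [Finset.mem_union, Finsupp.mem_support_iff, not_or, not_not] at hi
      rw [hi.1, hi.2]
  obtain ⟨i, hi, hlt⟩ := hex
  have hstrict := Finset.sum_lt_sum (s := a.support ∪ b.support)
    (f := fun i => a i) (g := fun i => b i)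
    (fun i _ => Finsupp.le_def.mp h i) ⟨i, hi, hlt⟩
  rw [← wt_eq_sum a Finset.subset_union_left, ← wt_eq_sum b Finset.subset_union_right] at hstrict
  omega

lemma antitone_of_isPart {φ : PF} (h : IsPart φ) {i j : ℕ} (hij : i ≤ j) : φ j ≤ φ i := by
  induction j, hij using Nat.le_induction with
  | base => exact le_rfl
  | succ n hn ih => exact le_trans (h n) ih

lemma part_supp {φ : PF} (h : IsPart φ) {i : ℕ} (hi : wt φ ≤ i) : φ i = 0 := by
  by_contra hc
  have hpos : ∀ j, j ≤ i → 1 ≤ φ j := fun j hj =>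
    le_trans (Nat.one_le_iff_ne_zero.mpr hc) (antitone_of_isPart h hj)
  have hsub : range (i + 1) ⊆ φ.support := fun j hj =>
    Finsupp.mem_support_iff.mpr (by
      have := hpos j (Nat.lt_succ_iff.mp (mem_range.mp hj)); omega)
  have hge : i + 1 ≤ wt φ := by
    calc i + 1 = ∑ _j ∈ range (i + 1), 1 := by simp
    _ ≤ ∑ j ∈ range (i + 1), φ j :=
        Finset.sum_le_sum (fun j hj => hpos j (Nat.lt_succ_iff.mp (mem_range.mp hj)))
    _ ≤ ∑ j ∈ φ.support, φ j := Finset.sum_le_sum_of_subset hsub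
    _ = wt φ := (wt_def φ).symm
  omega

lemma mem_shapes {φ : PF} {N : ℕ} : φ ∈ shapes N ↔ IsPart φ ∧ wt φ = N := by
  unfold shapes
  rw [Finset.mem_filter, Finset.mem_Iic]
  constructor
  · tauto
  · rintro ⟨h1, h2⟩
    refine ⟨?_, h1, h2⟩
    rw [Finsupp.le_def]
    intro i
    show φ i ≤ unif N i
    by_cases hi : i < N
    · have hu : unif N i = N := by simp [unif, hi]
      rw [hu]
      exact h2 ▸ le_wt φ i
    · have hz : φ i = 0 := part_supp h1 (by omega)
      simp [hz]

lemma mem_peelF {κ π : PF} {t : ℕ} : π ∈ peelF κ t ↔ IsPart π ∧ Strip π κ ∧ wt π + t = wt κ := by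
  unfold peelF
  rw [Finset.mem_filter, Finset.mem_Iic]
  exact ⟨fun h => h.2, fun h => ⟨h.2.1.1, h⟩⟩

lemma mem_stripsF {ν κ : PF} {r : ℕ} (hκ : IsPart κ) :
    κ ∈ stripsF ν r ↔ IsPart κ ∧ Strip ν κ ∧ wt κ = wt ν + r := by
  unfold stripsF
  rw [Finset.mem_filter, mem_shapes]
  tauto

/- ---------------- counting infrastructure ---------------- -/

/-- bound beyond which a finsupp vanishes -/
def LB (φ : PF) : ℕ := (φ.support.sup id) + 1

lemma lt_LB {φ : PF} {i : ℕ} (h : φ i ≠ 0) : i < LB φ :=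
  Nat.lt_succ_of_le (Finset.le_sup (f := id) (Finsupp.mem_support_iff.mpr h))

/-- cells of shape φ, as a finset (L bounds the rows) -/
def cellsF (φ : PF) (L : ℕ) : Finset (ℕ × ℕ) :=
  (range L).biUnion fun i => (range (φ i)).image (Prod.mk i)

lemma mem_cellsF {φ : PF} {L : ℕ} {p : ℕ × ℕ} : p ∈ cellsF φ L ↔ p.1 < L ∧ p.2 < φ p.1 := by
  obtain ⟨i, j⟩ := p
  simp only [cellsF, Finset.mem_biUnion, Finset.mem_range, Finset.mem_image]
  constructor
  · rintro ⟨i', hi', j', hj', h⟩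
    obtain ⟨rfl, rfl⟩ := Prod.mk.injEq .. ▸ h
    exact ⟨hi', hj'⟩
  · rintro ⟨h1, h2⟩
    exact ⟨i, h1, j, h2, rfl⟩

lemma card_cells_filter (φ : PF) (L : ℕ) (q : ℕ × ℕ → Prop) [DecidablePred q] :
    ((cellsF φ L).filter q).card = ∑ i ∈ range L, ((range (φ i)).filter fun j => q (i, j)).card := by
  unfold cellsF
  rw [Finset.filter_biUnion, Finset.card_biUnion]
  · refine Finset.sum_congr rfl fun i _ => ?_
    rw [Finset.filter_image]
    rw [Finset.card_image_of_injective]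
    intro a b hab
    exact ((Prod.mk.injEq _ _ _ _).mp hab).2
  · intro x _ y _ hxy
    apply Finset.disjoint_left.mpr
    intro p hp1 hp2
    simp only [Finset.mem_filter, Finset.mem_image] at hp1 hp2
    obtain ⟨⟨j1, _, rfl⟩, _⟩ := hp1
    obtain ⟨⟨j2, _, heq⟩, _⟩ := hp2
    exact hxy (((Prod.mk.injEq _ _ _ _).mp heq).1.symm)

lemma cells_set_eq (φ : PF) (T : ℕ → ℕ → ℕ) (v : ℕ) {L : ℕ} (hL : ∀ i, φ i ≠ 0 → i < L) :
    {p : ℕ × ℕ | p.2 < φ p.1 ∧ T p.1 p.2 = v} = ↑((cellsF φ L).filter fun p => T p.1 p.2 = v) := by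
  ext p
  simp only [Set.mem_setOf_eq, Finset.coe_filter, mem_cellsF]
  constructor
  · rintro ⟨h1, h2⟩
    exact ⟨⟨hL p.1 (by omega), h1⟩, h2⟩
  · rintro ⟨⟨_, h1⟩, h2⟩
    exact ⟨h1, h2⟩

lemma cnt_eq_card (φ : PF) (T : ℕ → ℕ → ℕ) (v : ℕ) {L : ℕ} (hL : ∀ i, φ i ≠ 0 → i < L) :
    cnt φ T v = ((cellsF φ L).filter fun p => T p.1 p.2 = v).card := by
  rw [cnt, cells_set_eq φ T v hL, Set.ncard_coe_finset]

lemma cnt_eq_sum (φ : PF) (T : ℕ → ℕ → ℕ) (v : ℕ) {L : ℕ} (hL : ∀ i, φ i ≠ 0 → i < L) :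
    cnt φ T v = ∑ i ∈ range L, ((range (φ i)).filter fun j => T i j = v).card := by
  rw [cnt_eq_card φ T v hL]
  exact card_cells_filter φ L _

lemma cnt_finite (φ : PF) (T : ℕ → ℕ → ℕ) (v : ℕ) :
    {p : ℕ × ℕ | p.2 < φ p.1 ∧ T p.1 p.2 = v}.Finite := by
  rw [cells_set_eq φ T v (fun i hi => lt_LB hi)]
  exact Finset.finite_toSet _

lemma val_mem {φ m : PF} {T : ℕ → ℕ → ℕ} (h : SSY φ m T) {i j : ℕ} (hc : j < φ i) :
    m (T i j) ≠ 0 := by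
  rw [← h.2.2.2 (T i j)]
  have hne : {p : ℕ × ℕ | p.2 < φ p.1 ∧ T p.1 p.2 = T i j}.Nonempty := ⟨(i, j), hc, rfl⟩
  have hfin := cnt_finite φ T (T i j)
  rw [cnt]
  exact Nat.pos_iff_ne_zero.mp ((Set.ncard_pos hfin).mpr hne)

lemma ssy_finite (φ m : PF) : {T | SSY φ m T}.Finite := by
  classical
  have hsub : {T | SSY φ m T} ⊆ Set.range
      (fun g : (cellsF φ (LB φ) → Fin (LB m)) => fun i j =>
        if h : (i, j) ∈ cellsF φ (LB φ) then (g ⟨(i, j), h⟩ : ℕ) else 0) := by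
    intro T hT
    have hval : ∀ p : ℕ × ℕ, p ∈ cellsF φ (LB φ) → T p.1 p.2 < LB m := by
      intro p hp
      exact lt_LB (val_mem hT (mem_cellsF.mp hp).2)
    refine ⟨fun pc => ⟨T pc.1.1 pc.1.2, hval pc.1 pc.2⟩, ?_⟩
    funext i j
    by_cases h : (i, j) ∈ cellsF φ (LB φ)
    · simp [h]
    · dsimp only
      rw [dif_neg h]
      refine (hT.1 i j ?_).symm
      intro hc
      have hne : φ i ≠ 0 := by omega
      exact h (mem_cellsF.mpr ⟨lt_LB hne, hc⟩)
  exact Set.Finite.subset (Set.finite_range _) hsub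

lemma row_mono {φ m : PF} {T : ℕ → ℕ → ℕ} (h : SSY φ m T) {i j j' : ℕ}
    (hjj : j ≤ j') (hj' : j' < φ i) : T i j ≤ T i j' := by
  have H : ∀ d : ℕ, ∀ {j : ℕ}, j + d < φ i → T i j ≤ T i (j + d) := by
    intro d
    induction d with
    | zero => intro j _; exact le_rfl
    | succ n ih =>
      intro j hj
      have h1 : j + n < φ i := by omega
      have h2 : T i (j + n) ≤ T i (j + n + 1) := h.2.1 i (j + n) (by omega)
      have h3 : j + n + 1 = j + (n + 1) := by omega
      rw [h3] at h2
      exact le_trans (ih h1) h2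
  have hje : j' = j + (j' - j) := by omega
  rw [hje]
  exact H _ (by omega)

lemma val_ge_row {φ m : PF} (hφ : IsPart φ) {T : ℕ → ℕ → ℕ} (h : SSY φ m T) :
    ∀ i j, j < φ i → i ≤ T i j := by
  intro i
  induction i with
  | zero => intro j _; exact Nat.zero_le _
  | succ n ih =>
    intro j hj
    have hcell : j < φ n := lt_of_lt_of_le hj (hφ n)
    have h1 := h.2.2.1 n j hj
    have h2 := ih j hcell
    omega

lemma wt_content {φ m : PF} {T : ℕ → ℕ → ℕ} (h : SSY φ m T) : wt m = wt φ := by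
  classical
  have hL : ∀ i, φ i ≠ 0 → i < LB φ := fun _ hi => lt_LB hi
  calc wt m = ∑ v ∈ m.support, m v := wt_def m
  _ = ∑ v ∈ m.support, ∑ i ∈ range (LB φ), ((range (φ i)).filter fun j => T i j = v).card :=
      Finset.sum_congr rfl fun v _ => ((h.2.2.2 v).symm.trans (cnt_eq_sum φ T v hL))
  _ = ∑ i ∈ range (LB φ), ∑ v ∈ m.support, ((range (φ i)).filter fun j => T i j = v).card :=
      Finset.sum_comm
  _ = ∑ i ∈ range (LB φ), φ i := by
      refine Finset.sum_congr rfl fun i _ => ?_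
      have hfib := Finset.card_eq_sum_card_fiberwise (s := range (φ i)) (t := m.support)
        (f := fun j => T i j)
        (fun j hj => Finsupp.mem_support_iff.mpr (val_mem h (Finset.mem_range.mp hj)))
      rw [Finset.card_range] at hfib
      exact hfib.symm
  _ = wt φ := (wt_eq_sum φ (fun i hi =>
      Finset.mem_range.mpr (lt_LB (Finsupp.mem_support_iff.mp hi)))).symm

lemma K_ne_wt {φ m : PF} (h : K φ m ≠ 0) : wt m = wt φ := by
  obtain ⟨T, hT⟩ := Set.nonempty_of_ncard_ne_zero h
  exact wt_content hT

lemma cnt_lt_k {φ m : PF} {T : ℕ → ℕ → ℕ} (h : SSY φ m T) (k L : ℕ)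
    (hL : ∀ i, φ i ≠ 0 → i < L) (i : ℕ) :
    ∑ v ∈ range k, ((range (φ i)).filter fun j => T i j = v).card
      = ((range (φ i)).filter fun j => T i j < k).card := by
  classical
  rw [Finset.card_eq_sum_card_fiberwise (s := (range (φ i)).filter fun j => T i j < k)
    (t := range k) (f := fun j => T i j)
    (fun j hj => Finset.mem_range.mpr (Finset.mem_filter.mp hj).2)]
  refine Finset.sum_congr rfl fun v hv => ?_
  congr 1
  ext j
  simp only [Finset.mem_filter, Finset.mem_range] at hv ⊢
  constructor
  · rintro ⟨h1, h2⟩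
    exact ⟨⟨h1, by omega⟩, h2⟩
  · rintro ⟨⟨h1, _⟩, h2⟩
    exact ⟨h1, h2⟩

lemma dom_of_ssy {φ m : PF} (hφ : IsPart φ) {T : ℕ → ℕ → ℕ} (h : SSY φ m T) (k : ℕ) :
    ∑ v ∈ range k, m v ≤ ∑ i ∈ range k, φ i := by
  classical
  set L := max (LB φ) k with hLdef
  have hL : ∀ i, φ i ≠ 0 → i < L := fun i hi => lt_of_lt_of_le (lt_LB hi) (le_max_left _ _)
  have step1 : ∑ v ∈ range k, m v
      = ∑ i ∈ range L, ((range (φ i)).filter fun j => T i j < k).card := by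
    calc ∑ v ∈ range k, m v
        = ∑ v ∈ range k, ∑ i ∈ range L, ((range (φ i)).filter fun j => T i j = v).card :=
          Finset.sum_congr rfl fun v _ => ((h.2.2.2 v).symm.trans (cnt_eq_sum φ T v hL))
      _ = ∑ i ∈ range L, ∑ v ∈ range k, ((range (φ i)).filter fun j => T i j = v).card :=
          Finset.sum_comm
      _ = ∑ i ∈ range L, ((range (φ i)).filter fun j => T i j < k).card :=
          Finset.sum_congr rfl fun i _ => cnt_lt_k h k L hL i
  rw [step1]
  have hkL : k ≤ L := le_max_right _ _
  have hsplit : range L = range k ∪ Finset.Ico k L := by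
    rw [Finset.range_eq_Ico, Finset.range_eq_Ico, Finset.Ico_union_Ico_eq_Ico (Nat.zero_le _) hkL]
  rw [hsplit, Finset.sum_union (by
    rw [Finset.range_eq_Ico]
    exact Finset.Ico_disjoint_Ico_consecutive 0 k L)]
  have hzero : ∑ i ∈ Finset.Ico k L, ((range (φ i)).filter fun j => T i j < k).card = 0 := by
    refine Finset.sum_eq_zero fun i hi => ?_
    rw [Finset.card_eq_zero]
    refine Finset.filter_false_of_mem fun j hj => ?_
    have := val_ge_row hφ h i j (Finset.mem_range.mp hj)
    have hik := (Finset.mem_Ico.mp hi).1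
    omega
  rw [hzero, add_zero]
  exact Finset.sum_le_sum fun i _ => le_trans (Finset.card_filter_le _ _) (by rw [Finset.card_range])

lemma K_self {φ : PF} (h : IsPart φ) : K φ φ = 1 := by
  classical
  set T0 : ℕ → ℕ → ℕ := fun i j => if j < φ i then i else 0 with hT0
  have hL : ∀ i, φ i ≠ 0 → i < LB φ := fun _ hi => lt_LB hi
  have hmem : SSY φ φ T0 := by
    refine ⟨?_, ?_, ?_, ?_⟩
    · intro i j hij; simp only [T0, if_neg hij]
    · intro i j hj
      have h1 : j < φ i := by omega
      simp only [T0, if_pos h1, if_pos hj]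
      exact le_rfl
    · intro i j hj
      have h2 : j < φ i := lt_of_lt_of_le hj (h i)
      simp only [T0, if_pos hj, if_pos h2]
      omega
    · intro v
      rw [cnt_eq_sum φ T0 v hL]
      have hrow : ∀ i, ((range (φ i)).filter fun j => T0 i j = v).card
          = if i = v then φ i else 0 := by
        intro i
        by_cases hiv : i = v
        · subst hiv
          rw [Finset.filter_true_of_mem, Finset.card_range, if_pos rfl]
          intro j hj
          simp only [T0, if_pos (Finset.mem_range.mp hj)]
        · rw [if_neg hiv, Finset.card_eq_zero]
          refine Finset.filter_false_of_mem fun j hj => ?_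
          simp only [T0, if_pos (Finset.mem_range.mp hj)]
          exact hiv
      rw [Finset.sum_congr rfl fun i _ => hrow i, Finset.sum_ite_eq' (range (LB φ)) v (fun i => φ i)]
      by_cases hv : v ∈ range (LB φ)
      · rw [if_pos hv]
      · rw [if_neg hv]
        by_contra hc
        exact hv (Finset.mem_range.mpr (lt_LB fun h0 => hc h0.symm))
  have huniq : ∀ T ∈ {T | SSY φ φ T}, T = T0 := by
    intro T hT
    have hval : ∀ i j, j < φ i → T i j = i := by
      intro i j hj
      set L := max (LB φ) (i + 1) with hLdef
      have hLp : ∀ i', φ i' ≠ 0 → i' < L := fun i' hi' =>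
        lt_of_lt_of_le (lt_LB hi') (le_max_left _ _)
      set SvalF := (cellsF φ L).filter (fun p => T p.1 p.2 < i + 1) with hSval
      set SrowF := (cellsF φ L).filter (fun p => p.1 < i + 1) with hSrow
      have hsub : SvalF ⊆ SrowF := by
        intro p hp
        rw [hSval, Finset.mem_filter] at hp
        rw [hSrow, Finset.mem_filter]
        refine ⟨hp.1, ?_⟩
        have := val_ge_row h hT p.1 p.2 (mem_cellsF.mp hp.1).2
        omega
      have c1 : SvalF.card = ∑ v ∈ range (i + 1), φ v := by
        rw [hSval]
        have : ((cellsF φ L).filter (fun p => T p.1 p.2 < i + 1)).card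
            = ∑ i' ∈ range L, ((range (φ i')).filter fun j => T i' j < i + 1).card :=
          card_cells_filter φ L _
        rw [this]
        rw [← Finset.sum_congr rfl fun i' _ => cnt_lt_k hT (i + 1) L hLp i']
        rw [Finset.sum_comm]
        refine Finset.sum_congr rfl fun v _ => ?_
        rw [← cnt_eq_sum φ T v hLp]
        exact hT.2.2.2 v
      have c2 : SrowF.card = ∑ v ∈ range (i + 1), φ v := by
        rw [hSrow, card_cells_filter φ L _]
        have hrw : ∀ i', ((range (φ i')).filter fun _ => i' < i + 1).card
            = if i' < i + 1 then φ i' else 0 := by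
          intro i'
          by_cases hii : i' < i + 1
          · rw [if_pos hii, Finset.filter_true_of_mem (fun _ _ => hii), Finset.card_range]
          · rw [if_neg hii, Finset.card_eq_zero]
            exact Finset.filter_false_of_mem (fun _ _ => hii)
        rw [Finset.sum_congr rfl fun i' _ => hrw i']
        have hmem1 : ∀ i', (if i' < i + 1 then φ i' else 0)
            = if i' ∈ range (i + 1) then φ i' else 0 := by
          intro i'; simp [Finset.mem_range]
        rw [Finset.sum_congr rfl fun i' _ => hmem1 i', Finset.sum_ite_mem,
          Finset.inter_eq_right.mpr (Finset.range_subset_range.mpr (le_max_right _ _))]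
      have heq : SvalF = SrowF := Finset.eq_of_subset_of_card_le hsub (by omega)
      have hmemrow : (i, j) ∈ SrowF := by
        rw [hSrow, Finset.mem_filter]
        exact ⟨mem_cellsF.mpr ⟨hLp i (by omega), hj⟩, by omega⟩
      have hmemval : (i, j) ∈ SvalF := heq ▸ hmemrow
      rw [hSval, Finset.mem_filter] at hmemval
      have h1 : T i j < i + 1 := hmemval.2
      have h2 := val_ge_row h hT i j hj
      omega
    funext i j
    by_cases hj : j < φ i
    · rw [hval i j hj]
      simp only [T0, if_pos hj]
    · rw [hT.1 i j hj]
      simp only [T0, if_neg hj]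
  have hset : {T | SSY φ φ T} = {T0} := Set.eq_singleton_iff_unique_mem.mpr ⟨hmem, huniq⟩
  rw [K, hset, Set.ncard_singleton]


/- ---------------- peel ---------------- -/

lemma downclosed_iff_range {A : Finset ℕ}
    (hd : ∀ a ∈ A, ∀ b, b ≤ a → b ∈ A) : ∀ j, j ∈ A ↔ j < A.card := by
  have key : A = range A.card := by
    ext j
    constructor
    · intro hj
      rw [Finset.mem_range]
      by_contra hc
      push_neg at hc
      have hsub : range (j + 1) ⊆ A := fun b hb => hd j hj b (Nat.lt_succ_iff.mp (mem_range.mp hb))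
      have := Finset.card_le_card hsub
      rw [Finset.card_range] at this
      omega
    · intro hj
      by_contra hc
      have hsub : A ⊆ range j := by
        intro a ha
        rw [Finset.mem_range]
        by_contra hc2
        push_neg at hc2
        exact hc (hd a ha j hc2)
      have := Finset.card_le_card hsub
      rw [Finset.card_range] at this
      rw [Finset.mem_range] at hj
      omega
  intro j
  conv_lhs => rw [key]
  rw [Finset.mem_range]

/-- the shape of the sub-tableau of values `< n` -/
noncomputable def πOf (κ : PF) (T : ℕ → ℕ → ℕ) (n : ℕ) : PF :=
  Finsupp.onFinset κ.support (fun i => ((range (κ i)).filter fun j => T i j < n).card)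
    (by
      intro i h
      rw [Finsupp.mem_support_iff]
      intro h0
      apply h
      rw [Finset.card_eq_zero, ← Finset.subset_empty]
      intro j hj
      rw [Finset.mem_filter, Finset.mem_range, h0] at hj
      omega)

lemma πOf_apply (κ : PF) (T : ℕ → ℕ → ℕ) (n i : ℕ) :
    πOf κ T n i = ((range (κ i)).filter fun j => T i j < n).card := rfl

section Peel

variable {κ m : PF} {n : ℕ}

lemma vals_le {T : ℕ → ℕ → ℕ} (hT : SSY κ m T) (hm : ∀ v, n < v → m v = 0)
    {i j : ℕ} (hc : j < κ i) : T i j ≤ n := by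
  by_contra hgt
  push_neg at hgt
  exact val_mem hT hc (hm _ hgt)

lemma πOf_prefix {T : ℕ → ℕ → ℕ} (hT : SSY κ m T) (i : ℕ) :
    ∀ j, (j < κ i ∧ T i j < n) ↔ j < πOf κ T n i := by
  have hd : ∀ a ∈ (range (κ i)).filter fun j => T i j < n, ∀ b, b ≤ a →
      b ∈ (range (κ i)).filter fun j => T i j < n := by
    intro a ha b hba
    rw [Finset.mem_filter, Finset.mem_range] at ha ⊢
    refine ⟨by omega, ?_⟩
    have := row_mono hT hba ha.1
    omega
  intro j
  rw [πOf_apply, ← downclosed_iff_range hd j, Finset.mem_filter, Finset.mem_range]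

lemma πOf_le (κ : PF) (T : ℕ → ℕ → ℕ) (n i : ℕ) : πOf κ T n i ≤ κ i := by
  rw [πOf_apply]
  exact le_trans (Finset.card_filter_le _ _) (le_of_eq (Finset.card_range _))

lemma πOf_isPart (hκ : IsPart κ) {T : ℕ → ℕ → ℕ} (hT : SSY κ m T) :
    IsPart (πOf κ T n) := by
  intro i
  by_cases h0 : πOf κ T n (i + 1) = 0
  · omega
  · have hj : πOf κ T n (i + 1) - 1 < πOf κ T n (i + 1) := by omega
    have h1 := (πOf_prefix hT (i + 1) _).mpr hj
    have h2 : πOf κ T n (i + 1) - 1 < κ i := lt_of_lt_of_le h1.1 (hκ i)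
    have h3 := hT.2.2.1 i _ h1.1
    have h4 : (πOf κ T n (i + 1) - 1 < κ i ∧ T i (πOf κ T n (i + 1) - 1) < n) := ⟨h2, by omega⟩
    have := (πOf_prefix hT i _).mp h4
    omega

lemma πOf_strip (hκ : IsPart κ) {T : ℕ → ℕ → ℕ} (hT : SSY κ m T)
    (hm : ∀ v, n < v → m v = 0) : Strip (πOf κ T n) κ := by
  constructor
  · exact fun i => πOf_le κ T n i
  · intro i
    by_cases h0 : κ (i + 1) = 0
    · omega
    · have hj : κ (i + 1) - 1 < κ (i + 1) := by omega
      have hcol := hT.2.2.1 i _ hj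
      have hvle := vals_le hT hm hj
      have h4 : (κ (i + 1) - 1 < κ i ∧ T i (κ (i + 1) - 1) < n) :=
        ⟨lt_of_lt_of_le hj (hκ i), by omega⟩
      have := (πOf_prefix hT i _).mp h4
      omega

lemma πOf_wt (hκ : IsPart κ) {T : ℕ → ℕ → ℕ} (hT : SSY κ m T)
    (hm : ∀ v, n < v → m v = 0) : wt (πOf κ T n) + m n = wt κ := by
  classical
  have hL : ∀ i, κ i ≠ 0 → i < LB κ := fun _ hi => lt_LB hi
  have hmn : m n = ∑ i ∈ range (LB κ), (κ i - πOf κ T n i) := by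
    rw [← hT.2.2.2 n, cnt_eq_sum κ T n hL]
    refine Finset.sum_congr rfl fun i _ => ?_
    have hsplit : ((range (κ i)).filter fun j => T i j = n)
        = (range (κ i)) \ ((range (κ i)).filter fun j => T i j < n) := by
      ext j
      simp only [Finset.mem_filter, Finset.mem_sdiff, Finset.mem_range]
      constructor
      · rintro ⟨h1, h2⟩
        exact ⟨h1, fun hc => by omega⟩
      · rintro ⟨h1, h2⟩
        refine ⟨h1, ?_⟩
        have hle := vals_le hT hm (show j < κ i from h1)
        by_contra hne
        exact h2 ⟨h1, by omega⟩
    rw [hsplit, Finset.card_sdiff_of_subset (Finset.filter_subset _ _), Finset.card_range, πOf_apply]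
  have hwtκ : wt κ = ∑ i ∈ range (LB κ), κ i :=
    wt_eq_sum κ (fun i hi => Finset.mem_range.mpr (lt_LB (Finsupp.mem_support_iff.mp hi)))
  have hwtπ : wt (πOf κ T n) = ∑ i ∈ range (LB κ), πOf κ T n i := by
    refine wt_eq_sum _ (fun i hi => Finset.mem_range.mpr ?_)
    have hi' := Finsupp.mem_support_iff.mp hi
    have : κ i ≠ 0 := by
      intro h0
      apply hi'
      have := πOf_le κ T n i
      omega
    exact lt_LB this
  have hle : ∀ i ∈ range (LB κ), πOf κ T n i ≤ κ i := fun i _ => πOf_le κ T n i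
  rw [hmn, hwtκ, hwtπ, ← Finset.sum_add_distrib]
  refine Finset.sum_congr rfl fun i hi => ?_
  have := hle i hi
  omega

/-- restriction of a tableau to values `< n` -/
noncomputable def resT (κ : PF) (T : ℕ → ℕ → ℕ) (n : ℕ) : ℕ → ℕ → ℕ :=
  fun i j => if j < πOf κ T n i then T i j else 0

/-- extending a tableau of shape π to κ by filling with value n -/
noncomputable def fillT (π κ : PF) (T' : ℕ → ℕ → ℕ) (n : ℕ) : ℕ → ℕ → ℕ :=
  fun i j => if j < π i then T' i j else if j < κ i then n else 0

lemma resT_ssy (hκ : IsPart κ) {T : ℕ → ℕ → ℕ} (hT : SSY κ m T)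
    (hm : ∀ v, n < v → m v = 0) : SSY (πOf κ T n) (m.erase n) (resT κ T n) := by
  refine ⟨?_, ?_, ?_, ?_⟩
  · intro i j hij
    simp only [resT]
    rw [if_neg hij]
  · intro i j hj
    have h1 : j < πOf κ T n i := by omega
    simp only [resT]
    rw [if_pos h1, if_pos hj]
    have h2 := (πOf_prefix hT i (j + 1)).mpr hj
    exact hT.2.1 i j (by omega)
  · intro i j hj
    have hple := πOf_isPart hκ hT (n := n) i
    have h1 : j < πOf κ T n i := by omega
    simp only [resT]
    rw [if_pos h1, if_pos hj]
    have h2 := (πOf_prefix hT (i + 1) j).mpr hj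
    exact hT.2.2.1 i j (lt_of_lt_of_le h2.1 le_rfl)
  · intro v
    by_cases hv : v = n
    · rw [hv]
      have hempty : {p : ℕ × ℕ | p.2 < πOf κ T n p.1 ∧ resT κ T n p.1 p.2 = n} = ∅ := by
        ext p
        simp only [Set.mem_setOf_eq, Set.mem_empty_iff_false, iff_false, not_and]
        intro h1
        simp only [resT]
        rw [if_pos h1]
        have := (πOf_prefix hT p.1 p.2).mpr h1
        omega
      rw [cnt, hempty, Set.ncard_empty, Finsupp.erase_same]
    · have hsets : {p : ℕ × ℕ | p.2 < πOf κ T n p.1 ∧ resT κ T n p.1 p.2 = v}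
          = {p : ℕ × ℕ | p.2 < κ p.1 ∧ T p.1 p.2 = v} := by
        ext p
        simp only [Set.mem_setOf_eq]
        constructor
        · rintro ⟨h1, h2⟩
          simp only [resT] at h2
          rw [if_pos h1] at h2
          have := (πOf_prefix hT p.1 p.2).mpr h1
          exact ⟨this.1, h2⟩
        · rintro ⟨h1, h2⟩
          have hvn : v < n := by
            have hle : T p.1 p.2 ≤ n := vals_le hT hm h1
            rw [h2] at hle
            omega
          have hTlt : T p.1 p.2 < n := by rw [h2]; exact hvn
          have hpre := (πOf_prefix hT p.1 p.2).mp ⟨h1, hTlt⟩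
          simp only [resT]
          rw [if_pos hpre]
          exact ⟨hpre, h2⟩
      rw [cnt, hsets, ← cnt, hT.2.2.2 v, Finsupp.erase_ne hv]

lemma fill_vals {π : PF} {T' : ℕ → ℕ → ℕ} (hT' : SSY π (m.erase n) T')
    (hm : ∀ v, n < v → m v = 0) {i j : ℕ} (hc : j < π i) : T' i j < n := by
  have h1 := val_mem hT' hc
  rcases Nat.lt_trichotomy (T' i j) n with h | h | h
  · exact h
  · rw [h, Finsupp.erase_same] at h1
    exact absurd rfl h1
  · rw [Finsupp.erase_ne (by omega)] at h1
    exact absurd (hm _ h) h1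

lemma fillT_ssy {π : PF} (hκ : IsPart κ) (hπ : IsPart π) (hstrip : Strip π κ)
    (hwt : wt π + m n = wt κ) (hm : ∀ v, n < v → m v = 0)
    {T' : ℕ → ℕ → ℕ} (hT' : SSY π (m.erase n) T') : SSY κ m (fillT π κ T' n) := by
  have hπκ : ∀ i, π i ≤ κ i := hstrip.1
  refine ⟨?_, ?_, ?_, ?_⟩
  · intro i j hij
    simp only [fillT]
    rw [if_neg (fun hc => hij (lt_of_lt_of_le hc (hπκ i))), if_neg hij]
  · intro i j hj
    simp only [fillT]
    by_cases h1 : j + 1 < π i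
    · rw [if_pos (by omega), if_pos h1]
      exact hT'.2.1 i j h1
    · by_cases h2 : j < π i
      · rw [if_pos h2, if_neg h1, if_pos hj]
        exact le_of_lt (fill_vals hT' hm h2)
      · rw [if_neg h2, if_neg h1, if_pos (by omega), if_pos hj]
  · intro i j hj
    simp only [fillT]
    by_cases h1 : j < π (i + 1)
    · have h2 : j < π i := lt_of_lt_of_le h1 (hπ i)
      rw [if_pos h2, if_pos h1]
      exact hT'.2.2.1 i j h1
    · have h2 : j < π i := lt_of_lt_of_le hj (hstrip.2 i)
      rw [if_pos h2, if_neg h1, if_pos hj]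
      exact fill_vals hT' hm h2
  · intro v
    classical
    have hLκ : ∀ i, κ i ≠ 0 → i < LB κ := fun _ hi => lt_LB hi
    by_cases hv : v = n
    · rw [hv]
      have hcnt : cnt κ (fillT π κ T' n) n = ∑ i ∈ range (LB κ), (κ i - π i) := by
        rw [cnt_eq_sum _ _ _ hLκ]
        refine Finset.sum_congr rfl fun i _ => ?_
        have hset : ((range (κ i)).filter fun j => fillT π κ T' n i j = n)
            = (range (κ i)) \ ((range (π i)) ) := by
          ext j
          simp only [Finset.mem_filter, Finset.mem_sdiff, Finset.mem_range]
          constructor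
          · rintro ⟨h1, h2⟩
            refine ⟨h1, fun hc => ?_⟩
            simp only [fillT] at h2
            rw [if_pos hc] at h2
            have := fill_vals hT' hm hc
            omega
          · rintro ⟨h1, h2⟩
            simp only [fillT]
            rw [if_neg h2, if_pos h1]
            exact ⟨h1, rfl⟩
        rw [hset, Finset.card_sdiff_of_subset (by
          intro j hj
          rw [Finset.mem_range] at hj ⊢
          exact lt_of_lt_of_le hj (hπκ i)), Finset.card_range, Finset.card_range]
      rw [hcnt]
      have hwκ : wt κ = ∑ i ∈ range (LB κ), κ i :=
        wt_eq_sum κ (fun i hi => Finset.mem_range.mpr (lt_LB (Finsupp.mem_support_iff.mp hi)))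
      have hwπ : wt π = ∑ i ∈ range (LB κ), π i := by
        refine wt_eq_sum _ (fun i hi => Finset.mem_range.mpr ?_)
        have hi' := Finsupp.mem_support_iff.mp hi
        refine lt_LB (fun h0 => hi' ?_)
        have := hπκ i
        omega
      have hsum2 : ∑ i ∈ range (LB κ), (κ i - π i) + ∑ i ∈ range (LB κ), π i
          = ∑ i ∈ range (LB κ), κ i := by
        rw [← Finset.sum_add_distrib]
        refine Finset.sum_congr rfl fun i _ => ?_
        have := hπκ i
        omega
      omega
    · have hsets : {p : ℕ × ℕ | p.2 < κ p.1 ∧ fillT π κ T' n p.1 p.2 = v}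
          = {p : ℕ × ℕ | p.2 < π p.1 ∧ T' p.1 p.2 = v} := by
        ext p
        simp only [Set.mem_setOf_eq]
        constructor
        · rintro ⟨h1, h2⟩
          by_cases hc : p.2 < π p.1
          · simp only [fillT] at h2
            rw [if_pos hc] at h2
            exact ⟨hc, h2⟩
          · simp only [fillT] at h2
            rw [if_neg hc, if_pos h1] at h2
            exact absurd h2.symm hv
        · rintro ⟨h1, h2⟩
          refine ⟨lt_of_lt_of_le h1 (hπκ p.1), ?_⟩
          simp only [fillT]
          rw [if_pos h1]
          exact h2
      rw [cnt, hsets, ← cnt, hT'.2.2.2 v, Finsupp.erase_ne hv]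

lemma πOf_fill {π : PF} (hπ : IsPart π) (hstrip : Strip π κ)
    (hm : ∀ v, n < v → m v = 0) {T' : ℕ → ℕ → ℕ} (hT' : SSY π (m.erase n) T') :
    πOf κ (fillT π κ T' n) n = π := by
  ext i
  rw [πOf_apply]
  have hset : ((range (κ i)).filter fun j => fillT π κ T' n i j < n) = range (π i) := by
    ext j
    simp only [Finset.mem_filter, Finset.mem_range]
    constructor
    · rintro ⟨h1, h2⟩
      by_contra hc
      push_neg at hc
      simp only [fillT] at h2
      rw [if_neg (by omega), if_pos h1] at h2
      omega
    · intro h1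
      refine ⟨lt_of_lt_of_le h1 (hstrip.1 i), ?_⟩
      simp only [fillT]
      rw [if_pos h1]
      exact fill_vals hT' hm h1
  rw [hset, Finset.card_range]

lemma fill_res {T : ℕ → ℕ → ℕ} (hT : SSY κ m T) (hm : ∀ v, n < v → m v = 0) :
    fillT (πOf κ T n) κ (resT κ T n) n = T := by
  funext i j
  simp only [fillT]
  by_cases h1 : j < πOf κ T n i
  · rw [if_pos h1]
    simp only [resT]
    rw [if_pos h1]
  · rw [if_neg h1]
    by_cases h2 : j < κ i
    · rw [if_pos h2]
      have hle := vals_le hT hm h2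
      have : ¬ (j < κ i ∧ T i j < n) := fun hc => h1 ((πOf_prefix hT i j).mp hc)
      have : ¬ T i j < n := fun hc => this ⟨h2, hc⟩
      omega
    · rw [if_neg h2, hT.1 i j h2]

lemma res_fill {π : PF} (hπ : IsPart π) (hstrip : Strip π κ)
    (hm : ∀ v, n < v → m v = 0) {T' : ℕ → ℕ → ℕ} (hT' : SSY π (m.erase n) T') :
    resT κ (fillT π κ T' n) n = T' := by
  funext i j
  simp only [resT]
  rw [πOf_fill hπ hstrip hm hT']
  by_cases h1 : j < π i
  · rw [if_pos h1]
    simp only [fillT]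
    rw [if_pos h1]
  · rw [if_neg h1, (hT'.1 i j h1)]

end Peel

lemma peel {κ : PF} (hκ : IsPart κ) (m : PF) (n : ℕ) (hm : ∀ v, n < v → m v = 0) :
    K κ m = ∑ π ∈ peelF κ (m n), K π (m.erase n) := by
  classical
  have hfin := ssy_finite κ m
  set F := hfin.toFinset with hF
  have hKF : K κ m = F.card := by
    rw [K, Set.ncard_eq_toFinset_card _ hfin]
  have hmaps : ∀ T ∈ F, πOf κ T n ∈ peelF κ (m n) := by
    intro T hT
    rw [hF, Set.Finite.mem_toFinset] at hT
    exact mem_peelF.mpr ⟨πOf_isPart hκ hT, πOf_strip hκ hT hm, πOf_wt hκ hT hm⟩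
  rw [hKF, Finset.card_eq_sum_card_fiberwise hmaps]
  refine Finset.sum_congr rfl fun π hπmem => ?_
  obtain ⟨hπpart, hπstrip, hπwt⟩ := mem_peelF.mp hπmem
  -- fiber has the same cardinality as SSY π (m.erase n)
  have himage : (fun T => resT κ T n) '' ↑(F.filter fun T => πOf κ T n = π)
      = {T' | SSY π (m.erase n) T'} := by
    ext T'
    simp only [Set.mem_image, Finset.coe_filter, Set.mem_setOf_eq]
    constructor
    · rintro ⟨T, ⟨hTF, hTπ⟩, rfl⟩
      rw [hF, Set.Finite.mem_toFinset] at hTF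
      have := resT_ssy hκ hTF hm
      rwa [hTπ] at this
    · intro hT'
      refine ⟨fillT π κ T' n, ⟨?_, ?_⟩, ?_⟩
      · rw [hF, Set.Finite.mem_toFinset]
        exact fillT_ssy hκ hπpart hπstrip hπwt hm hT'
      · exact πOf_fill hπpart hπstrip hm hT'
      · exact res_fill hπpart hπstrip hm hT'
  have hinj : Set.InjOn (fun T => resT κ T n) ↑(F.filter fun T => πOf κ T n = π) := by
    intro T1 h1 T2 h2 heq
    simp only [Finset.coe_filter, Set.mem_setOf_eq, hF, Set.Finite.mem_toFinset] at h1 h2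
    have e1 : fillT π κ (resT κ T1 n) n = T1 := by
      rw [← h1.2]
      exact fill_res h1.1 hm
    have e2 : fillT π κ (resT κ T2 n) n = T2 := by
      rw [← h2.2]
      exact fill_res h2.1 hm
    have heq' : resT κ T1 n = resT κ T2 n := heq
    rw [← e1, ← e2, heq']
  have hcard := Set.ncard_image_of_injOn hinj
  rw [himage] at hcard
  rw [K, hcard, Set.ncard_coe_finset]


/- ---------------- the reflection bijection ---------------- -/

lemma LB_zero {φ : PF} {i : ℕ} (h : LB φ ≤ i) : φ i = 0 := by
  by_contra hc
  have := lt_LB hc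
  omega

noncomputable def lA (ν π : PF) (i : ℕ) : ℕ := max (ν (i + 1)) (π (i + 1))

noncomputable def uA (ν π : PF) (i : ℕ) : ℕ := min (ν i) (π i)

noncomputable def refl1 (ν π : PF) (r : ℕ) (τ : PF) : PF :=
  Finsupp.onFinset (range (LB ν + LB π + 1))
    (fun i => if i = 0 then
        wt ν + r - (∑ k ∈ range (LB ν + LB π), (lA ν π k + uA ν π k - τ k))
      else lA ν π (i - 1) + uA ν π (i - 1) - τ (i - 1))
    (by
      intro i h
      rw [Finset.mem_range]
      by_contra hc
      push_neg at hc
      apply h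
      rw [if_neg (by omega : ¬ i = 0)]
      have h1 : ν i = 0 := LB_zero (by omega)
      have h2 : π i = 0 := LB_zero (by omega)
      have h3 : ν (i - 1) = 0 := LB_zero (by omega)
      have h4 : π (i - 1) = 0 := LB_zero (by omega)
      have h5 : i - 1 + 1 = i := by omega
      simp only [lA, uA, h5, h1, h2, h3, h4]
      omega)

noncomputable def refl2 (ν π : PF) (κ : PF) : PF :=
  Finsupp.onFinset (range (LB ν + LB π))
    (fun i => lA ν π i + uA ν π i - κ (i + 1))
    (by
      intro i h
      rw [Finset.mem_range]
      by_contra hc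
      push_neg at hc
      apply h
      have h1 : ν (i + 1) = 0 := LB_zero (by omega)
      have h2 : π (i + 1) = 0 := LB_zero (by omega)
      have h3 : ν i = 0 := LB_zero (by omega)
      simp only [lA, uA, h1, h2, h3]
      omega)

lemma bijCard (ν π : PF) (hν : IsPart ν) (hπ : IsPart π) (r t : ℕ) (hw : wt π + t = wt ν + r) :
    (((Finset.Iic ν).filter fun τ => IsPart τ ∧ Strip τ ν ∧ Strip τ π ∧ wt ν ≤ wt τ + t).card)
      = ((shapes (wt ν + r)).filter fun κ => Strip ν κ ∧ Strip π κ).card := by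
  classical
  set B := LB ν + LB π with hB
  have hνz : ∀ i, B ≤ i → ν i = 0 := fun i hi => LB_zero (by omega)
  have hπz : ∀ i, B ≤ i → π i = 0 := fun i hi => LB_zero (by omega)
  -- the sum identity
  have hmaxmin : ∀ i, max (ν i) (π i) + min (ν i) (π i) = ν i + π i := fun i => by omega
  have hwtν : wt ν = ∑ i ∈ range (B + 1), ν i :=
    wt_eq_sum ν (fun i hi => Finset.mem_range.mpr
      (by have := lt_LB (Finsupp.mem_support_iff.mp hi); omega))
  have hwtπ : wt π = ∑ i ∈ range (B + 1), π i :=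
    wt_eq_sum π (fun i hi => Finset.mem_range.mpr
      (by have := lt_LB (Finsupp.mem_support_iff.mp hi); omega))
  have hSig : ∑ i ∈ range B, (lA ν π i + uA ν π i) + max (ν 0) (π 0) = wt ν + wt π := by
    have h1 : ∑ i ∈ range (B + 1), (max (ν i) (π i) + min (ν i) (π i)) = wt ν + wt π := by
      rw [Finset.sum_congr rfl fun i _ => hmaxmin i, Finset.sum_add_distrib, ← hwtν, ← hwtπ]
    have h2 : ∑ i ∈ range (B + 1), max (ν i) (π i)
        = (∑ i ∈ range B, lA ν π i) + max (ν 0) (π 0) := by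
      have := Finset.sum_range_succ' (fun i => max (ν i) (π i)) B
      simpa [lA] using this
    have h3 : ∑ i ∈ range (B + 1), min (ν i) (π i) = ∑ i ∈ range B, uA ν π i := by
      rw [Finset.sum_range_succ]
      have hmin0 : min (ν B) (π B) = 0 := by rw [hνz B le_rfl]; omega
      rw [hmin0, add_zero]
      exact Finset.sum_congr rfl fun i _ => rfl
    rw [Finset.sum_add_distrib] at h1
    rw [h2, h3] at h1
    rw [Finset.sum_add_distrib]
    omega
  -- bounds for members of the left set
  have hτfacts : ∀ τ : PF, IsPart τ → Strip τ ν → Strip τ π →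
      (∀ i, lA ν π i ≤ τ i ∧ τ i ≤ uA ν π i) := by
    intro τ _ h1 h2 i
    constructor
    · simp only [lA]
      exact max_le (le_trans (h1.2 i) le_rfl) (h2.2 i)
    · simp only [uA]
      exact le_min (Finsupp.le_def.mp h1.1 i) (Finsupp.le_def.mp h2.1 i)
  have hκfacts : ∀ κ : PF, Strip ν κ → Strip π κ →
      (∀ i, lA ν π i ≤ κ (i + 1) ∧ κ (i + 1) ≤ uA ν π i) ∧ max (ν 0) (π 0) ≤ κ 0 := by
    intro κ h1 h2
    constructor
    · intro i
      constructor
      · simp only [lA]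
        exact max_le (Finsupp.le_def.mp h1.1 (i + 1)) (Finsupp.le_def.mp h2.1 (i + 1))
      · simp only [uA]
        exact le_min (h1.2 i) (h2.2 i)
    · exact max_le (Finsupp.le_def.mp h1.1 0) (Finsupp.le_def.mp h2.1 0)
  have hwtτ : ∀ τ : PF, τ ≤ ν → wt τ = ∑ i ∈ range B, τ i := by
    intro τ hτν
    refine wt_eq_sum τ (fun i hi => Finset.mem_range.mpr ?_)
    have h1 := Finsupp.mem_support_iff.mp hi
    have h2 := Finsupp.le_def.mp hτν i
    have : ν i ≠ 0 := by omega
    have := lt_LB this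
    omega
  -- forward map is well defined
  have hFmem : ∀ τ ∈ (Finset.Iic ν).filter
      (fun τ => IsPart τ ∧ Strip τ ν ∧ Strip τ π ∧ wt ν ≤ wt τ + t),
      refl1 ν π r τ ∈ (shapes (wt ν + r)).filter fun κ => Strip ν κ ∧ Strip π κ := by
    intro τ hτ
    rw [Finset.mem_filter, Finset.mem_Iic] at hτ
    obtain ⟨hτν, hτpart, hτsν, hτsπ, hτwt⟩ := hτ
    have hbd := hτfacts τ hτpart hτsν hτsπ
    set S := ∑ k ∈ range B, (lA ν π k + uA ν π k - τ k) with hS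
    have hSval : S + wt τ = ∑ i ∈ range B, (lA ν π i + uA ν π i) := by
      rw [hS, hwtτ τ hτν, ← Finset.sum_add_distrib]
      refine Finset.sum_congr rfl fun i _ => ?_
      have := (hbd i).2
      omega
    have hSle : S + max (ν 0) (π 0) ≤ wt ν + r := by omega
    have happ0 : refl1 ν π r τ 0 = wt ν + r - S := by
      simp only [refl1, Finsupp.onFinset_apply, eq_self_iff_true, if_true]
      rfl
    have happs : ∀ i, refl1 ν π r τ (i + 1) = lA ν π i + uA ν π i - τ i := by
      intro i
      simp only [refl1, Finsupp.onFinset_apply, if_neg (Nat.succ_ne_zero i)]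
      congr 1 <;> omega
    have hκbd : ∀ i, lA ν π i ≤ refl1 ν π r τ (i + 1) ∧ refl1 ν π r τ (i + 1) ≤ uA ν π i := by
      intro i
      rw [happs i]
      have h1 := (hbd i).1
      have h2 := (hbd i).2
      omega
    have hwtκ : wt (refl1 ν π r τ) = wt ν + r := by
      have hsupp : (refl1 ν π r τ).support ⊆ range (B + 1) := Finsupp.support_onFinset_subset
      rw [wt_eq_sum _ hsupp, Finset.sum_range_succ' _ B]
      have e1 : ∑ i ∈ range B, refl1 ν π r τ (i + 1) = S := by
        rw [hS]
        exact Finset.sum_congr rfl fun i _ => happs i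
      rw [e1, happ0]
      omega
    have hpart : IsPart (refl1 ν π r τ) := by
      intro i
      cases i with
      | zero =>
        rw [happ0, happs 0]
        have h1 := (hbd 0).1
        have h2 := (hbd 0).2
        have hu : uA ν π 0 ≤ max (ν 0) (π 0) := by
          simp only [uA]; omega
        omega
      | succ i =>
        rw [happs i, happs (i + 1)]
        have h1 := (hbd i).1
        have h2 := (hbd i).2
        have h3 := (hbd (i + 1)).1
        have h4 := (hbd (i + 1)).2
        have hul : uA ν π (i + 1) ≤ lA ν π i := by
          simp only [uA, lA]; omega
        omega
    have hsν : Strip ν (refl1 ν π r τ) := by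
      constructor
      · rw [Finsupp.le_def]
        intro i
        cases i with
        | zero =>
          rw [happ0]
          have : ν 0 ≤ max (ν 0) (π 0) := le_max_left _ _
          omega
        | succ i =>
          have h1 := (hκbd i).1
          have : ν (i + 1) ≤ lA ν π i := le_max_left _ _
          omega
      · intro i
        have h2 := (hκbd i).2
        have : uA ν π i ≤ ν i := min_le_left _ _
        omega
    have hsπ : Strip π (refl1 ν π r τ) := by
      constructor
      · rw [Finsupp.le_def]
        intro i
        cases i with
        | zero =>
          rw [happ0]
          have : π 0 ≤ max (ν 0) (π 0) := le_max_right _ _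
          omega
        | succ i =>
          have h1 := (hκbd i).1
          have : π (i + 1) ≤ lA ν π i := le_max_right _ _
          omega
      · intro i
        have h2 := (hκbd i).2
        have : uA ν π i ≤ π i := min_le_right _ _
        omega
    rw [Finset.mem_filter, mem_shapes]
    exact ⟨⟨hpart, hwtκ⟩, hsν, hsπ⟩
  -- backward map is well defined
  have hGmem : ∀ κ ∈ (shapes (wt ν + r)).filter (fun κ => Strip ν κ ∧ Strip π κ),
      refl2 ν π κ ∈ (Finset.Iic ν).filter
        (fun τ => IsPart τ ∧ Strip τ ν ∧ Strip τ π ∧ wt ν ≤ wt τ + t) := by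
    intro κ hκ
    rw [Finset.mem_filter, mem_shapes] at hκ
    obtain ⟨⟨hκpart, hκwt⟩, hκsν, hκsπ⟩ := hκ
    obtain ⟨hκbd, hκ0⟩ := hκfacts κ hκsν hκsπ
    have happ : ∀ i, refl2 ν π κ i = lA ν π i + uA ν π i - κ (i + 1) := fun i => rfl
    have hτbd : ∀ i, lA ν π i ≤ refl2 ν π κ i ∧ refl2 ν π κ i ≤ uA ν π i := by
      intro i
      rw [happ i]
      have h1 := (hκbd i).1
      have h2 := (hκbd i).2
      omega
    have hτpart : IsPart (refl2 ν π κ) := by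
      intro i
      have h1 := (hτbd i).1
      have h2 := (hτbd i).2
      have h3 := (hτbd (i + 1)).1
      have h4 := (hτbd (i + 1)).2
      have hul : uA ν π (i + 1) ≤ lA ν π i := by simp only [uA, lA]; omega
      omega
    have hτsν : Strip (refl2 ν π κ) ν := by
      constructor
      · rw [Finsupp.le_def]
        intro i
        have h2 := (hτbd i).2
        have : uA ν π i ≤ ν i := min_le_left _ _
        omega
      · intro i
        have h1 := (hτbd i).1
        have : ν (i + 1) ≤ lA ν π i := le_max_left _ _
        omega
    have hτsπ : Strip (refl2 ν π κ) π := by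
      constructor
      · rw [Finsupp.le_def]
        intro i
        have h2 := (hτbd i).2
        have : uA ν π i ≤ π i := min_le_right _ _
        omega
      · intro i
        have h1 := (hτbd i).1
        have : π (i + 1) ≤ lA ν π i := le_max_right _ _
        omega
    have hκsupp : κ.support ⊆ range (B + 1) := by
      intro i hi
      rw [Finset.mem_range]
      have h1 := Finsupp.mem_support_iff.mp hi
      cases i with
      | zero => omega
      | succ j =>
        have h2 := (hκbd j).2
        by_contra hc
        push_neg at hc
        have hz : uA ν π j = 0 := by
          simp only [uA, hνz j (by omega)]
          omega
        omega
    have hκsum : ∑ i ∈ range (B + 1), κ i = wt ν + r := by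
      rw [← wt_eq_sum κ hκsupp, hκwt]
    have hwtτ2 : wt (refl2 ν π κ) + (wt ν + r)
        = ∑ i ∈ range B, (lA ν π i + uA ν π i) + κ 0 := by
      have hs : (refl2 ν π κ).support ⊆ range B := Finsupp.support_onFinset_subset
      rw [wt_eq_sum _ hs]
      have e1 : (∑ i ∈ range B, κ (i + 1)) + κ 0 = wt ν + r := by
        rw [← hκsum, Finset.sum_range_succ' _ B]
      have e3 : ∑ i ∈ range B, (refl2 ν π κ i + κ (i + 1))
          = ∑ i ∈ range B, (lA ν π i + uA ν π i) := by
        refine Finset.sum_congr rfl fun i _ => ?_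
        have h1 := (hκbd i).2
        rw [happ i]
        omega
      rw [Finset.sum_add_distrib] at e3
      omega
    rw [Finset.mem_filter, Finset.mem_Iic]
    refine ⟨?_, hτpart, hτsν, hτsπ, ?_⟩
    · rw [Finsupp.le_def]
      intro i
      have h2 := (hτbd i).2
      have : uA ν π i ≤ ν i := min_le_left _ _
      omega
    · omega
  -- inverse identities
  have hGF : ∀ τ ∈ (Finset.Iic ν).filter
      (fun τ => IsPart τ ∧ Strip τ ν ∧ Strip τ π ∧ wt ν ≤ wt τ + t),
      refl2 ν π (refl1 ν π r τ) = τ := by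
    intro τ hτ
    rw [Finset.mem_filter, Finset.mem_Iic] at hτ
    obtain ⟨hτν, hτpart, hτsν, hτsπ, hτwt⟩ := hτ
    have hbd := hτfacts τ hτpart hτsν hτsπ
    ext i
    have happs : refl1 ν π r τ (i + 1) = lA ν π i + uA ν π i - τ i := by
      simp only [refl1, Finsupp.onFinset_apply, if_neg (Nat.succ_ne_zero i)]
      congr 1 <;> omega
    have happ2 : refl2 ν π (refl1 ν π r τ) i
        = lA ν π i + uA ν π i - refl1 ν π r τ (i + 1) := rfl
    rw [happ2, happs]
    have h1 := (hbd i).1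
    have h2 := (hbd i).2
    omega
  have hFG : ∀ κ ∈ (shapes (wt ν + r)).filter (fun κ => Strip ν κ ∧ Strip π κ),
      refl1 ν π r (refl2 ν π κ) = κ := by
    intro κ hκ
    rw [Finset.mem_filter, mem_shapes] at hκ
    obtain ⟨⟨hκpart, hκwt⟩, hκsν, hκsπ⟩ := hκ
    obtain ⟨hκbd, hκ0⟩ := hκfacts κ hκsν hκsπ
    have happ : ∀ i, refl2 ν π κ i = lA ν π i + uA ν π i - κ (i + 1) := fun i => rfl
    have hterm : ∀ i, lA ν π i + uA ν π i - refl2 ν π κ i = κ (i + 1) := by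
      intro i
      have h2 := (hκbd i).2
      rw [happ i]
      omega
    have hκsupp : κ.support ⊆ range (B + 1) := by
      intro i hi
      rw [Finset.mem_range]
      have h1 := Finsupp.mem_support_iff.mp hi
      cases i with
      | zero => omega
      | succ j =>
        have h2 := (hκbd j).2
        by_contra hc
        push_neg at hc
        have hz : uA ν π j = 0 := by
          simp only [uA, hνz j (by omega)]
          omega
        omega
    have hκsum : (∑ i ∈ range B, κ (i + 1)) + κ 0 = wt ν + r := by
      rw [← Finset.sum_range_succ' κ B, ← wt_eq_sum κ hκsupp, hκwt]
    ext i
    cases i with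
    | zero =>
      have happ0 : refl1 ν π r (refl2 ν π κ) 0
          = wt ν + r - (∑ k ∈ range B, (lA ν π k + uA ν π k - refl2 ν π κ k)) := by
        simp only [refl1, Finsupp.onFinset_apply, eq_self_iff_true, if_true]
        rfl
      rw [happ0, Finset.sum_congr rfl fun k _ => hterm k, ]
      omega
    | succ i =>
      have happs : refl1 ν π r (refl2 ν π κ) (i + 1)
          = lA ν π i + uA ν π i - refl2 ν π κ i := by
        simp only [refl1, Finsupp.onFinset_apply, if_neg (Nat.succ_ne_zero i)]
        congr 1 <;> omega
      rw [happs, hterm i]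
  exact Finset.card_bij' (fun τ _ => refl1 ν π r τ) (fun κ _ => refl2 ν π κ)
    hFmem hGmem hGF hFG


/- ---------------- Pieri ---------------- -/

lemma mem_stripsF' {ν κ : PF} {r : ℕ} :
    κ ∈ stripsF ν r ↔ IsPart κ ∧ Strip ν κ ∧ wt κ = wt ν + r := by
  unfold stripsF
  rw [Finset.mem_filter, mem_shapes]
  tauto

lemma wt_zero : wt (0 : PF) = 0 := by
  rw [wt_def]
  simp

lemma wt_eq_zero {φ : PF} (h : wt φ = 0) : φ = 0 := by
  ext i
  have := le_wt φ i
  simp only [Finsupp.coe_zero, Pi.zero_apply]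
  omega

lemma isPart_zero : IsPart (0 : PF) := fun _ => le_rfl

lemma K_ne_zero_left {ν : PF} (hν : ν ≠ 0) : K ν 0 = 0 := by
  rw [K]
  convert Set.ncard_empty (ℕ → ℕ → ℕ)
  ext T
  simp only [Set.mem_setOf_eq, Set.mem_empty_iff_false, iff_false]
  intro hT
  have hex : ∃ i, ν i ≠ 0 := by
    by_contra hc
    push_neg at hc
    exact hν (Finsupp.ext fun i => hc i)
  obtain ⟨i, hi⟩ := hex
  exact (val_mem hT (show 0 < ν i by omega)) (by simp)

lemma le_unif {φ : PF} {N : ℕ} (h1 : IsPart φ) (h2 : wt φ ≤ N) : φ ≤ unif N := by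
  rw [Finsupp.le_def]
  intro i
  by_cases hi : i < N
  · have hu : unif N i = N := by simp [unif, hi]
    rw [hu]
    exact le_trans (le_wt φ i) h2
  · have hz : φ i = 0 := part_supp h1 (by omega)
    simp [hz]

lemma erase_of_apply_eq_zero {q : PF} {n : ℕ} (h : q n = 0) : q.erase n = q := by
  ext v
  by_cases hv : v = n
  · subst hv
    rw [Finsupp.erase_same, h]
  · rw [Finsupp.erase_ne hv]

lemma double_to_mult {α β : Type} [DecidableEq β] (A : Finset α) (G : α → Finset β)
    (BIG : Finset β) (hG : ∀ a ∈ A, G a ⊆ BIG) (f : β → ℕ) :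
    ∑ a ∈ A, ∑ b ∈ G a, f b = ∑ b ∈ BIG, (A.filter (fun a => b ∈ G a)).card * f b := by
  classical
  calc ∑ a ∈ A, ∑ b ∈ G a, f b
      = ∑ a ∈ A, ∑ b ∈ BIG, if b ∈ G a then f b else 0 := by
        refine Finset.sum_congr rfl fun a ha => ?_
        rw [Finset.sum_ite_mem, Finset.inter_eq_right.mpr (hG a ha)]
    _ = ∑ b ∈ BIG, ∑ a ∈ A, if b ∈ G a then f b else 0 := Finset.sum_comm
    _ = ∑ b ∈ BIG, (A.filter (fun a => b ∈ G a)).card * f b := by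
        refine Finset.sum_congr rfl fun b _ => ?_
        rw [Finset.sum_ite, Finset.sum_const, Finset.sum_const_zero, add_zero, smul_eq_mul]

lemma antidiag_split (m : PF) (n : ℕ) (f : PF × PF → ℕ) :
    ∑ p ∈ antidiagonal m, f p
      = ∑ q ∈ antidiagonal (m.erase n), ∑ ab ∈ antidiagonal (m n),
          f (q.1 + Finsupp.single n ab.1, q.2 + Finsupp.single n ab.2) := by
  classical
  rw [← Finset.sum_product']
  refine Finset.sum_bij' (fun p _ => ((p.1.erase n, p.2.erase n), (p.1 n, p.2 n)))
    (fun x _ => (x.1.1 + Finsupp.single n x.2.1, x.1.2 + Finsupp.single n x.2.2))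
    ?_ ?_ ?_ ?_ ?_
  · intro p hp
    rw [HasAntidiagonal.mem_antidiagonal] at hp
    rw [Finset.mem_product, HasAntidiagonal.mem_antidiagonal, HasAntidiagonal.mem_antidiagonal]
    constructor
    · rw [← Finsupp.erase_add, hp]
    · rw [← Finsupp.add_apply, hp]
  · intro x hx
    rw [Finset.mem_product, HasAntidiagonal.mem_antidiagonal, HasAntidiagonal.mem_antidiagonal] at hx
    rw [HasAntidiagonal.mem_antidiagonal]
    have : x.1.1 + Finsupp.single n x.2.1 + (x.1.2 + Finsupp.single n x.2.2)
        = (x.1.1 + x.1.2) + Finsupp.single n (x.2.1 + x.2.2) := by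
      rw [Finsupp.single_add]
      abel
    rw [this, hx.1, hx.2, Finsupp.erase_add_single]
  · intro p hp
    dsimp only
    rw [Finsupp.erase_add_single, Finsupp.erase_add_single]
  · intro x hx
    rw [Finset.mem_product, HasAntidiagonal.mem_antidiagonal, HasAntidiagonal.mem_antidiagonal] at hx
    have h11 : x.1.1 n = 0 := by
      have := DFunLike.congr_fun hx.1 n
      rw [Finsupp.add_apply, Finsupp.erase_same] at this
      omega
    have h12 : x.1.2 n = 0 := by
      have := DFunLike.congr_fun hx.1 n
      rw [Finsupp.add_apply, Finsupp.erase_same] at this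
      omega
    have e1 : ∀ (y : PF) (a : ℕ), y n = 0 → (y + Finsupp.single n a).erase n = y := by
      intro y a hy
      rw [Finsupp.erase_add, Finsupp.erase_single, add_zero, erase_of_apply_eq_zero hy]
    have e2 : ∀ (y : PF) (a : ℕ), y n = 0 → (y + Finsupp.single n a) n = a := by
      intro y a hy
      rw [Finsupp.add_apply, hy, Finsupp.single_eq_same, zero_add]
    dsimp only
    ext : 2
    · exact e1 _ _ h11
    · exact e1 _ _ h12
    · exact e2 _ _ h11
    · exact e2 _ _ h12
  · intro p hp
    rw [Finsupp.erase_add_single, Finsupp.erase_add_single]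

lemma pieriCountAux (n : ℕ) : ∀ (m : PF), (∀ v, n ≤ v → m v = 0) → ∀ (ν : PF), IsPart ν →
    ∀ (r : ℕ),
    (∑ p ∈ antidiagonal m, if wt p.2 = r then K ν p.1 else 0)
      = ∑ κ ∈ stripsF ν r, K κ m := by
  induction n with
  | zero =>
    intro m hm ν hν r
    have hm0 : m = 0 := Finsupp.ext fun v => hm v (Nat.zero_le v)
    subst hm0
    rw [Finsupp.antidiagonal_zero]
    rw [Finset.sum_singleton]
    by_cases hcase : ν = 0 ∧ r = 0
    · obtain ⟨hν0, hr0⟩ := hcase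
      subst hν0; subst hr0
      have hstr : stripsF (0 : PF) 0 = {0} := by
        ext κ
        rw [mem_stripsF', Finset.mem_singleton]
        constructor
        · rintro ⟨h1, h2, h3⟩
          rw [wt_zero] at h3
          exact wt_eq_zero h3
        · rintro rfl
          exact ⟨isPart_zero, ⟨le_rfl, fun i => le_rfl⟩, rfl⟩
      rw [hstr, Finset.sum_singleton, if_pos wt_zero, K_self isPart_zero]
    · have hL : (if wt (0 : PF) = r then K ν 0 else 0) = 0 := by
        by_cases hr : r = 0
        · subst hr
          rw [if_pos wt_zero]
          have hν0 : ν ≠ 0 := fun h => hcase ⟨h, rfl⟩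
          exact K_ne_zero_left hν0
        · rw [if_neg (by rw [wt_zero]; omega)]
      rw [hL]
      symm
      refine Finset.sum_eq_zero fun κ hκ => ?_
      by_contra hKne
      have hwts := K_ne_wt hKne
      rw [wt_zero] at hwts
      have hκ0 : κ = 0 := wt_eq_zero hwts.symm
      subst hκ0
      obtain ⟨h1, h2, h3⟩ := mem_stripsF'.mp hκ
      rw [wt_zero] at h3
      have hν0 : ν = 0 := by
        have := wt_le_of_le h2.1
        rw [wt_zero] at this
        exact wt_eq_zero (by omega)
      exact hcase ⟨hν0, by omega⟩
  | succ n IH =>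
    intro m hm ν hν r
    classical
    set t := m n with ht
    set m' := m.erase n with hm'
    have hm'supp : ∀ v, n ≤ v → m' v = 0 := by
      intro v hv
      by_cases hvn : v = n
      · rw [hm', hvn, Finsupp.erase_same]
      · rw [hm', Finsupp.erase_ne hvn]
        exact hm v (by omega)
    have hq1supp : ∀ q : PF × PF, q ∈ antidiagonal m' → ∀ v, n ≤ v → q.1 v = 0 := by
      intro q hq v hv
      rw [HasAntidiagonal.mem_antidiagonal] at hq
      have := DFunLike.congr_fun hq v
      rw [Finsupp.add_apply] at this
      have := hm'supp v hv
      omega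
    -- Step 1 : split the antidiagonal at n
    rw [antidiag_split m n (fun p => if wt p.2 = r then K ν p.1 else 0)]
    -- Step 2 : rewrite each summand by peeling value n from K ν
    have step2 : ∀ q ∈ antidiagonal m', ∀ ab ∈ antidiagonal t,
        (if wt (q.2 + Finsupp.single n ab.2) = r
          then K ν (q.1 + Finsupp.single n ab.1) else 0)
        = ∑ τ ∈ peelF ν ab.1, (if wt q.2 + ab.2 = r then K τ q.1 else 0) := by
      intro q hq ab _
      have hcontent : ∀ v, n < v → (q.1 + Finsupp.single n ab.1) v = 0 := by
        intro v hv
        rw [Finsupp.add_apply, hq1supp q hq v (by omega), Finsupp.single_apply,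
          if_neg (by omega)]
        rfl
      have hatn : (q.1 + Finsupp.single n ab.1) n = ab.1 := by
        rw [Finsupp.add_apply, hq1supp q hq n le_rfl, Finsupp.single_eq_same, zero_add]
      have herase : (q.1 + Finsupp.single n ab.1).erase n = q.1 := by
        rw [Finsupp.erase_add, Finsupp.erase_single, add_zero,
          erase_of_apply_eq_zero (hq1supp q hq n le_rfl)]
      have hpeel := peel hν (q.1 + Finsupp.single n ab.1) n hcontent
      rw [hatn, herase] at hpeel
      rw [wt_add, wt_single]
      by_cases hcond : wt q.2 + ab.2 = r
      · rw [if_pos hcond, hpeel]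
        refine Finset.sum_congr rfl fun τ _ => ?_
        rw [if_pos hcond]
      · rw [if_neg hcond]
        symm
        exact Finset.sum_eq_zero fun τ _ => if_neg hcond
    rw [Finset.sum_congr rfl fun q hq => Finset.sum_congr rfl fun ab hab => step2 q hq ab hab]
    -- Step 3 : regroup the (ab, τ) double sum over τ ∈ peelBIG
    set peelBIG := (Finset.Iic ν).filter
      (fun τ => IsPart τ ∧ Strip τ ν ∧ wt ν ≤ wt τ + t) with hpeelBIG
    have hdisj : ∀ (x : ℕ), x ∈ range (t + 1) → ∀ (y : ℕ), y ∈ range (t + 1) → x ≠ y →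
        Disjoint (peelF ν x) (peelF ν y) := by
      intro x _ y _ hxy
      rw [Finset.disjoint_left]
      intro τ h1 h2
      rw [mem_peelF] at h1 h2
      omega
    have hbiUnion : (range (t + 1)).biUnion (fun a => peelF ν a) = peelBIG := by
      ext τ
      rw [Finset.mem_biUnion, hpeelBIG, Finset.mem_filter, Finset.mem_Iic]
      constructor
      · rintro ⟨a, ha, hτ⟩
        rw [mem_peelF] at hτ
        rw [Finset.mem_range] at ha
        exact ⟨hτ.2.1.1, hτ.1, hτ.2.1, by omega⟩
      · rintro ⟨hτν, hτpart, hτstrip, hτwt⟩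
        have hle : wt τ ≤ wt ν := wt_le_of_le hτstrip.1
        refine ⟨wt ν - wt τ, Finset.mem_range.mpr (by omega), ?_⟩
        rw [mem_peelF]
        exact ⟨hτpart, hτstrip, by omega⟩
    have step3 : ∀ q ∈ antidiagonal m',
        (∑ ab ∈ antidiagonal t, ∑ τ ∈ peelF ν ab.1,
          (if wt q.2 + ab.2 = r then K τ q.1 else 0))
        = ∑ τ ∈ peelBIG, (if wt q.2 + t + wt τ = r + wt ν then K τ q.1 else 0) := by
      intro q _
      rw [Finset.Nat.sum_antidiagonal_eq_sum_range_succ_mk]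
      rw [← hbiUnion, Finset.sum_biUnion hdisj]
      refine Finset.sum_congr rfl fun a ha => Finset.sum_congr rfl fun τ hτ => ?_
      rw [mem_peelF] at hτ
      rw [Finset.mem_range] at ha
      refine if_congr ?_ rfl rfl
      omega
    rw [Finset.sum_congr rfl step3, Finset.sum_comm]
    -- Step 4 : apply the inductive hypothesis for each τ
    have step4 : ∀ τ ∈ peelBIG,
        (∑ q ∈ antidiagonal m', (if wt q.2 + t + wt τ = r + wt ν then K τ q.1 else 0))
        = if t + wt τ ≤ r + wt ν then
            ∑ π ∈ stripsF τ (r + wt ν - (t + wt τ)), K π m' else 0 := by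
      intro τ hτ
      rw [hpeelBIG, Finset.mem_filter] at hτ
      obtain ⟨hτpart, hτstrip, hτwt⟩ := hτ.2
      by_cases hcond : t + wt τ ≤ r + wt ν
      · rw [if_pos hcond]
        rw [← IH m' hm'supp τ hτpart (r + wt ν - (t + wt τ))]
        refine Finset.sum_congr rfl fun q _ => ?_
        refine if_congr ?_ rfl rfl
        omega
      · rw [if_neg hcond]
        refine Finset.sum_eq_zero fun q _ => ?_
        rw [if_neg (by omega)]
    rw [Finset.sum_congr rfl step4]
    -- Step 5 : peel value n on the right-hand side
    have step5 : ∀ κ ∈ stripsF ν r, K κ m = ∑ π ∈ peelF κ t, K π m' := by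
      intro κ hκ
      have hκpart := (mem_stripsF'.mp hκ).1
      exact peel hκpart m n (fun v hv => hm v (by omega))
    rw [Finset.sum_congr rfl step5]
    -- Step 6 : compare multiplicities via the reflection bijection
    set W := r + wt ν - t with hW
    set PBIG := (Finset.Iic (unif (r + wt ν))).filter
      (fun π => IsPart π ∧ wt π + t = r + wt ν) with hPBIG
    have hsubL : ∀ τ ∈ peelBIG.filter (fun τ => t + wt τ ≤ r + wt ν),
        stripsF τ (r + wt ν - (t + wt τ)) ⊆ PBIG := by
      intro τ hτ
      rw [Finset.mem_filter, hpeelBIG, Finset.mem_filter] at hτ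
      intro π hπ
      rw [mem_stripsF'] at hπ
      rw [hPBIG, Finset.mem_filter, Finset.mem_Iic]
      have h2 := hτ.2
      have h3 := hπ.2.2
      refine ⟨le_unif hπ.1 (by omega), hπ.1, by omega⟩
    have hsubR : ∀ κ ∈ stripsF ν r, peelF κ t ⊆ PBIG := by
      intro κ hκ
      rw [mem_stripsF'] at hκ
      intro π hπ
      rw [mem_peelF] at hπ
      rw [hPBIG, Finset.mem_filter, Finset.mem_Iic]
      have h1 := hπ.2.2
      have h2 := hκ.2.2
      refine ⟨le_unif hπ.1 (by omega), hπ.1, by omega⟩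
    rw [← Finset.sum_filter, double_to_mult _ _ PBIG hsubL (fun π => K π m'),
      double_to_mult _ _ PBIG hsubR (fun π => K π m')]
    refine Finset.sum_congr rfl fun π hπmem => ?_
    rw [hPBIG, Finset.mem_filter] at hπmem
    obtain ⟨_, hπpart, hπwt⟩ := hπmem
    congr 1
    -- identify both filters with the two sides of bijCard
    have hLfilter : (peelBIG.filter (fun τ => t + wt τ ≤ r + wt ν)).filter
        (fun τ => π ∈ stripsF τ (r + wt ν - (t + wt τ)))
        = (Finset.Iic ν).filter
          (fun τ => IsPart τ ∧ Strip τ ν ∧ Strip τ π ∧ wt ν ≤ wt τ + t) := by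
      ext τ
      rw [Finset.mem_filter, Finset.mem_filter, hpeelBIG, Finset.mem_filter,
        Finset.mem_Iic, mem_stripsF', Finset.mem_filter, Finset.mem_Iic]
      constructor
      · rintro ⟨⟨⟨hτν, hτpart, hτsν, hτwt⟩, hcond⟩, hπpart2, hτsπ, hπwt2⟩
        exact ⟨hτν, hτpart, hτsν, hτsπ, hτwt⟩
      · rintro ⟨hτν, hτpart, hτsν, hτsπ, hτwt⟩
        have hτπ : wt τ ≤ wt π := wt_le_of_le hτsπ.1
        refine ⟨⟨⟨hτν, hτpart, hτsν, hτwt⟩, by omega⟩, hπpart, hτsπ, by omega⟩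
    have hRfilter : (stripsF ν r).filter (fun κ => π ∈ peelF κ t)
        = (shapes (wt ν + r)).filter (fun κ => Strip ν κ ∧ Strip π κ) := by
      ext κ
      rw [Finset.mem_filter, mem_stripsF', mem_peelF, Finset.mem_filter, mem_shapes]
      constructor
      · rintro ⟨⟨hκpart, hκsν, hκwt⟩, hπpart2, hπsκ, hπwt2⟩
        exact ⟨⟨hκpart, by omega⟩, hκsν, hπsκ⟩
      · rintro ⟨⟨hκpart, hκwt⟩, hκsν, hπsκ⟩
        exact ⟨⟨hκpart, hκsν, by omega⟩, hπpart, hπsκ, by omega⟩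
    rw [hLfilter, hRfilter]
    exact bijCard ν π hν hπpart r t (by omega)

lemma pieriCount (ν : PF) (hν : IsPart ν) (r : ℕ) (m : PF) :
    ∑ p ∈ antidiagonal m, (if wt p.2 = r then K ν p.1 else 0)
      = ∑ κ ∈ stripsF ν r, K κ m :=
  pieriCountAux (LB m) m (fun v hv => by
    by_contra hc
    have := lt_LB hc
    omega) ν hν r


lemma pieriSeries (ν : PF) (hν : IsPart ν) (r : ℕ) :
    SchP ν * hN r = ∑ κ ∈ stripsF ν r, SchP κ := by
  classical
  apply MvPowerSeries.ext
  intro m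
  rw [MvPowerSeries.coeff_mul]
  have hR : MvPowerSeries.coeff m (∑ κ ∈ stripsF ν r, SchP κ)
      = ∑ κ ∈ stripsF ν r, (K κ m : ℤ) := by
    rw [map_sum]
    rfl
  rw [hR]
  have hL : ∀ p ∈ antidiagonal m,
      MvPowerSeries.coeff p.1 (SchP ν) * MvPowerSeries.coeff p.2 (hN r)
        = (if wt p.2 = r then (K ν p.1 : ℤ) else 0) := by
    intro p _
    have h1 : MvPowerSeries.coeff p.1 (SchP ν) = (K ν p.1 : ℤ) := rfl
    have h2 : MvPowerSeries.coeff p.2 (hN r) = if wt p.2 = r then 1 else 0 := rfl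
    rw [h1, h2]
    by_cases h : wt p.2 = r <;> simp [h]
  rw [Finset.sum_congr rfl hL]
  have hcast : (∑ p ∈ antidiagonal m, (if wt p.2 = r then (K ν p.1 : ℤ) else 0))
      = ((∑ p ∈ antidiagonal m, if wt p.2 = r then K ν p.1 else 0 : ℕ) : ℤ) := by
    rw [Nat.cast_sum]
    refine Finset.sum_congr rfl fun p _ => ?_
    by_cases h : wt p.2 = r <;> simp [h]
  rw [hcast, pieriCount ν hν r m, Nat.cast_sum]

/- ---------------- lists to finsupps ---------------- -/

noncomputable def toP (l : List ℕ) : PF :=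
  Finsupp.onFinset (range l.length) (fun i => l.getD i 0)
    (by intro i h; simp only [mem_range]; by_contra hc; push_neg at hc
        exact h (List.getD_eq_default _ _ hc))

@[simp] lemma toP_apply (l : List ℕ) (i : ℕ) : toP l i = l.getD i 0 := rfl

lemma toP_nil : toP [] = 0 := by
  ext i
  simp [toP]

lemma sum_range_getD (l : List ℕ) : ∑ i ∈ range l.length, l.getD i 0 = l.sum := by
  induction l with
  | nil => simp
  | cons a l ih =>
    rw [List.length_cons, Finset.sum_range_succ', List.sum_cons]
    have h1 : ∀ i, (a :: l).getD (i + 1) 0 = l.getD i 0 := fun i => rfl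
    have h2 : (a :: l).getD 0 0 = a := rfl
    rw [Finset.sum_congr rfl fun i _ => h1 i, h2, ih]
    omega

lemma wt_toP (l : List ℕ) : wt (toP l) = l.sum := by
  rw [wt_eq_sum (toP l) (R := range l.length) Finsupp.support_onFinset_subset]
  exact sum_range_getD l

lemma isPart_toP {l : List ℕ} (hl : IsPartitionList l) : IsPart (toP l) := by
  intro i
  rw [toP_apply, toP_apply]
  by_cases h : i + 1 < l.length
  · have hij := List.pairwise_iff_get.mp hl.1 ⟨i, by omega⟩ ⟨i + 1, h⟩ (by simp)
    rw [List.getD_eq_getElem l 0 h, List.getD_eq_getElem l 0 (by omega)]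
    simpa using hij
  · rw [List.getD_eq_default l 0 (by omega)]
    omega

lemma schurFn_eq {l : List ℕ} (hl : IsPartitionList l) : schurFn l = SchP (toP l) := by
  classical
  have hpos : ∀ i, i < l.length → 0 < l.getD i 0 := by
    intro i hi
    rw [List.getD_eq_getElem l 0 hi]
    exact hl.2 _ (l.getElem_mem hi)
  have hcell : ∀ i j, SkewCell l [] i j ↔ j < toP l i := by
    intro i j
    rw [SkewCell, toP_apply]
    simp only [List.getD_nil]
    constructor
    · rintro ⟨h1, _, h3⟩
      exact h3
    · intro h
      refine ⟨?_, Nat.zero_le _, h⟩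
      by_contra hc
      push_neg at hc
      rw [List.getD_eq_default l 0 hc] at h
      omega
  have hcontent : ∀ T v, skewContent l [] T v = cnt (toP l) T v := by
    intro T v
    rw [skewContent, cnt_eq_sum (toP l) T v (L := l.length) (fun i hi => by
      by_contra hc
      push_neg at hc
      rw [toP_apply, List.getD_eq_default l 0 hc] at hi
      exact hi rfl)]
    refine Finset.sum_congr rfl fun i _ => ?_
    congr 1
    rw [toP_apply]
    congr 1
    simp only [List.getD_nil]
    exact (Finset.range_eq_Ico _).symm
  have hpart := isPart_toP hl
  funext m
  show (Set.ncard {T : ℕ → ℕ → ℕ | IsSkewSSYT l [] T ∧ ∀ v, skewContent l [] T v = m v} : ℤ)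
      = (K (toP l) m : ℤ)
  congr 2
  ext T
  simp only [Set.mem_setOf_eq]
  constructor
  · rintro ⟨⟨hoff, hrow, hcol⟩, hcont⟩
    refine ⟨fun i j hij => hoff i j (fun hc => hij ((hcell i j).mp hc)), ?_, ?_, ?_⟩
    · intro i j hj
      exact hrow i j ((hcell i j).mpr (by omega)) ((hcell i (j + 1)).mpr hj)
    · intro i j hj
      exact hcol i j ((hcell i j).mpr (lt_of_lt_of_le hj (hpart i))) ((hcell (i + 1) j).mpr hj)
    · intro v
      rw [← hcontent T v]
      exact hcont v
  · rintro ⟨hoff, hrow, hcol, hcont⟩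
    refine ⟨⟨fun i j hij => hoff i j (fun hc => hij ((hcell i j).mpr hc)), ?_, ?_⟩, ?_⟩
    · intro i j _ hc2
      exact hrow i j ((hcell i (j + 1)).mp hc2)
    · intro i j _ hc2
      exact hcol i j ((hcell (i + 1) j).mp hc2)
    · intro v
      rw [hcontent T v]
      exact hcont v

lemma toP_append (μ : List ℕ) (r : ℕ) :
    toP (μ ++ [r]) = toP μ + Finsupp.single μ.length r := by
  ext i
  rw [Finsupp.add_apply, toP_apply, toP_apply, Finsupp.single_apply]
  rcases lt_trichotomy i μ.length with h | h | h
  · rw [List.getD_append _ _ _ _ h, if_neg (by omega)]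
    omega
  · subst h
    rw [List.getD_eq_default _ _ le_rfl, if_pos rfl, zero_add]
    have : (μ ++ [r]).getD μ.length 0 = [r].getD 0 0 := by
      rw [List.getD_append_right _ _ _ _ le_rfl, Nat.sub_self]
    rw [this]
    rfl
  · rw [List.getD_eq_default _ _ (show (μ ++ [r]).length ≤ i by
        rw [List.length_append, List.length_singleton]; omega),
      List.getD_eq_default _ _ (by omega), if_neg (by omega)]
    omega

lemma K_lex_zero {lam μ : List ℕ} (hlam : IsPartitionList lam) (hμ : IsPartitionList μ)
    (hsum : μ.sum = lam.sum) (hlex : LexLt lam μ) : K (toP lam) (toP μ) = 0 := by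
  by_contra hc
  obtain ⟨T, hT⟩ := Set.nonempty_of_ncard_ne_zero hc
  obtain ⟨k, hpre, hk⟩ := hlex
  have hdom := dom_of_ssy (isPart_toP hlam) hT (k + 1)
  have e1 : ∑ v ∈ range (k + 1), toP μ v = (∑ v ∈ range k, toP lam v) + μ.getD k 0 := by
    rw [Finset.sum_range_succ]
    congr 1
    refine Finset.sum_congr rfl fun v hv => ?_
    rw [toP_apply, toP_apply, hpre v (mem_range.mp hv)]
  have e2 : ∑ v ∈ range (k + 1), toP lam v = (∑ v ∈ range k, toP lam v) + lam.getD k 0 :=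
    Finset.sum_range_succ _ _
  rw [e1, e2] at hdom
  have : toP lam k = lam.getD k 0 := rfl
  omega

/- ---------------- small series lemmas ---------------- -/

lemma K_zero_shape (m : PF) : K 0 m = if m = 0 then 1 else 0 := by
  by_cases h : m = 0
  · subst h
    rw [if_pos rfl]
    exact K_self isPart_zero
  · rw [if_neg h]
    by_contra hc
    have := K_ne_wt hc
    rw [wt_zero] at this
    exact h (wt_eq_zero this)

lemma SchP_zero : SchP (0 : PF) = 1 := by
  apply MvPowerSeries.ext
  intro m
  have h1 : MvPowerSeries.coeff m (SchP 0) = (K 0 m : ℤ) := rfl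
  rw [h1, K_zero_shape, MvPowerSeries.coeff_one]
  by_cases h : m = 0 <;> simp [h]

lemma shapes_zero : shapes 0 = {0} := by
  ext φ
  rw [mem_shapes, Finset.mem_singleton]
  constructor
  · rintro ⟨h1, h2⟩
    exact wt_eq_zero h2
  · rintro rfl
    exact ⟨isPart_zero, wt_zero⟩

lemma weighted_regroup {M : Type} [AddCommMonoid M] [Module ℤ M] (A : Finset PF)
    (G : PF → Finset PF) (BIG : Finset PF) (hG : ∀ a ∈ A, G a ⊆ BIG) (wgt : PF → ℤ)
    (f : PF → M) :
    ∑ a ∈ A, wgt a • ∑ b ∈ G a, f b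
      = ∑ b ∈ BIG, (∑ a ∈ A.filter (fun a => b ∈ G a), wgt a) • f b := by
  classical
  calc ∑ a ∈ A, wgt a • ∑ b ∈ G a, f b
      = ∑ a ∈ A, ∑ b ∈ G a, wgt a • f b := by
        refine Finset.sum_congr rfl fun a _ => ?_
        rw [Finset.smul_sum]
    _ = ∑ a ∈ A, ∑ b ∈ BIG, if b ∈ G a then wgt a • f b else 0 := by
        refine Finset.sum_congr rfl fun a ha => ?_
        rw [Finset.sum_ite_mem, Finset.inter_eq_right.mpr (hG a ha)]
    _ = ∑ b ∈ BIG, ∑ a ∈ A, if b ∈ G a then wgt a • f b else 0 := Finset.sum_comm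
    _ = ∑ b ∈ BIG, (∑ a ∈ A.filter (fun a => b ∈ G a), wgt a) • f b := by
        refine Finset.sum_congr rfl fun b _ => ?_
        rw [Finset.sum_ite, Finset.sum_const_zero, add_zero, Finset.sum_smul]

/- ---------------- dual Pieri expansion of hProd ---------------- -/

lemma DP (μ : List ℕ) (hμ : IsPartitionList μ) :
    hProd μ = ∑ φ ∈ shapes μ.sum, (K φ (toP μ) : ℤ) • SchP φ := by
  classical
  induction μ using List.reverseRecOn with
  | nil =>
    rw [List.sum_nil, shapes_zero, Finset.sum_singleton, toP_nil, K_self isPart_zero,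
      SchP_zero]
    simp [hProd]
  | append_singleton μ r IH =>
    have hμ' : IsPartitionList μ := by
      constructor
      · exact hμ.1.sublist (List.sublist_append_left μ [r])
      · intro x hx
        exact hμ.2 x (List.mem_append_left [r] hx)
    have hprod : hProd (μ ++ [r]) = hProd μ * hN r := by
      rw [hProd, List.map_append, List.prod_append]
      simp [hProd]
    rw [hprod, IH hμ', Finset.sum_mul]
    have step1 : ∀ φ ∈ shapes μ.sum,
        ((K φ (toP μ) : ℤ) • SchP φ) * hN r = (K φ (toP μ) : ℤ) • ∑ κ ∈ stripsF φ r, SchP κ := by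
      intro φ hφ
      rw [smul_mul_assoc, pieriSeries φ (mem_shapes.mp hφ).1 r]
    rw [Finset.sum_congr rfl step1]
    have hG : ∀ φ ∈ shapes μ.sum, stripsF φ r ⊆ shapes (μ.sum + r) := by
      intro φ hφ κ hκ
      rw [mem_stripsF'] at hκ
      rw [mem_shapes]
      exact ⟨hκ.1, by rw [hκ.2.2, (mem_shapes.mp hφ).2]⟩
    rw [weighted_regroup _ _ _ hG]
    have hsum : (μ ++ [r]).sum = μ.sum + r := by simp
    rw [hsum]
    refine Finset.sum_congr rfl fun κ hκ => ?_
    congr 1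
    -- ∑_{φ : strips} K φ (toP μ) = K κ (toP (μ ++ [r]))
    obtain ⟨hκpart, hκwt⟩ := mem_shapes.mp hκ
    set n := μ.length with hn
    have hatn : toP (μ ++ [r]) n = r := by
      rw [toP_append, Finsupp.add_apply, toP_apply, List.getD_eq_default _ _ le_rfl,
        Finsupp.single_eq_same, zero_add]
    have hcontent : ∀ v, n < v → toP (μ ++ [r]) v = 0 := by
      intro v hv
      rw [toP_apply, List.getD_eq_default _ _ (by simp; omega)]
    have herase : (toP (μ ++ [r])).erase n = toP μ := by
      rw [toP_append, Finsupp.erase_add, Finsupp.erase_single, add_zero,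
        erase_of_apply_eq_zero]
      rw [toP_apply, List.getD_eq_default _ _ le_rfl]
    have hpeel := peel hκpart (toP (μ ++ [r])) n hcontent
    rw [hatn, herase] at hpeel
    rw [hpeel]
    symm
    rw [← Nat.cast_sum]
    congr 1
    apply Finset.sum_congr
    · ext φ
      rw [mem_peelF, Finset.mem_filter, mem_shapes, mem_stripsF']
      constructor
      · rintro ⟨h1, h2, h3⟩
        exact ⟨⟨h1, by omega⟩, hκpart, h2, by omega⟩
      · rintro ⟨⟨h1, h2⟩, h3, h4, h5⟩
        exact ⟨h1, h4, by omega⟩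
    · intro φ _
      rfl

/- ---------------- independence ---------------- -/

lemma indep (F : Finset PF) (hF : ∀ φ ∈ F, IsPart φ) (w : PF → ℤ)
    (h : ∑ φ ∈ F, w φ • SchP φ = 0) : ∀ φ ∈ F, w φ = 0 := by
  classical
  by_contra hc
  push_neg at hc
  obtain ⟨φ1, hφ1F, hφ1w⟩ := hc
  set Supp := F.filter (fun φ => w φ ≠ 0) with hSupp
  have hne : Supp.Nonempty := ⟨φ1, by rw [hSupp, Finset.mem_filter]; exact ⟨hφ1F, hφ1w⟩⟩
  obtain ⟨φmax, hφmaxS, hφmaxLe⟩ := Finset.exists_max_image Supp wt hne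
  set M := wt φmax with hM
  set C := Supp.filter (fun φ => wt φ = M) with hC
  have hCne : C.Nonempty := ⟨φmax, by rw [hC, Finset.mem_filter]; exact ⟨hφmaxS, rfl⟩⟩
  obtain ⟨φ0, hφ0C, hφ0W⟩ := Finset.exists_max_image C
    (fun φ => ∑ k ∈ range (M + 1), ∑ i ∈ range k, φ i) hCne
  have hφ0S : φ0 ∈ Supp := (Finset.mem_filter.mp hφ0C).1
  have hφ0F : φ0 ∈ F := (Finset.mem_filter.mp hφ0S).1
  have hφ0M : wt φ0 = M := (Finset.mem_filter.mp hφ0C).2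
  have heval : ∑ φ ∈ F, w φ * (K φ φ0 : ℤ) = 0 := by
    have hco := congrArg (fun g => MvPowerSeries.coeff φ0 g) h
    simp only [map_sum, map_zero] at hco
    rw [← hco]
    refine Finset.sum_congr rfl fun φ _ => ?_
    rw [map_smul, smul_eq_mul]
    rfl
  have hterm : ∀ φ ∈ F, φ ≠ φ0 → w φ * (K φ φ0 : ℤ) = 0 := by
    intro φ hφF hφne
    by_cases hwφ : w φ = 0
    · rw [hwφ, zero_mul]
    · have hφS : φ ∈ Supp := by rw [hSupp, Finset.mem_filter]; exact ⟨hφF, hwφ⟩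
      by_cases hK : K φ φ0 = 0
      · rw [hK, Nat.cast_zero, mul_zero]
      · exfalso
        have hwt : wt φ0 = wt φ := K_ne_wt hK
        have hφC : φ ∈ C := by
          rw [hC, Finset.mem_filter]
          exact ⟨hφS, by omega⟩
        obtain ⟨T, hT⟩ := Set.nonempty_of_ncard_ne_zero hK
        have hdom : ∀ k, ∑ v ∈ range k, φ0 v ≤ ∑ i ∈ range k, φ i :=
          fun k => dom_of_ssy (hF φ hφF) hT k
        have hWle := hφ0W φ hφC
        have hWge : (∑ k ∈ range (M + 1), ∑ i ∈ range k, φ0 i)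
            ≤ ∑ k ∈ range (M + 1), ∑ i ∈ range k, φ i :=
          Finset.sum_le_sum fun k _ => hdom k
        have hpre : ∀ k ∈ range (M + 1), ∑ i ∈ range k, φ i = ∑ i ∈ range k, φ0 i := by
          by_contra hcon
          push_neg at hcon
          obtain ⟨k0, hk0, hk0ne⟩ := hcon
          have hstrict : (∑ k ∈ range (M + 1), ∑ i ∈ range k, φ0 i)
              < ∑ k ∈ range (M + 1), ∑ i ∈ range k, φ i :=
            Finset.sum_lt_sum (fun k _ => hdom k) ⟨k0, hk0, by
              have := hdom k0
              omega⟩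
          omega
        apply hφne
        ext i
        by_cases hi : i < M
        · have h1 := hpre (i + 1) (Finset.mem_range.mpr (by omega))
          have h2 := hpre i (Finset.mem_range.mpr (by omega))
          rw [Finset.sum_range_succ, Finset.sum_range_succ] at h1
          omega
        · have hz1 : φ i = 0 := part_supp (hF φ hφF) (by
            have : wt φ = M := (Finset.mem_filter.mp hφC).2
            omega)
          have hz2 : φ0 i = 0 := part_supp (hF φ0 hφ0F) (by omega)
          rw [hz1, hz2]
  have hsingle := Finset.sum_eq_single_of_mem φ0 hφ0F hterm
  rw [hsingle, K_self (hF φ0 hφ0F), Nat.cast_one, mul_one] at heval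
  exact (Finset.mem_filter.mp hφ0S).2 heval


end Aux
end Aux


open Aux in
/-- if `f = c_λ h_λ + ∑_{μ >_lex λ} c_μ h_μ` with `c_λ ≠ 0` (so `f ≠ 0`,
homogeneous) and `f` is Schur-positive, then `c_λ > 0`. -/
theorem lex_least_coeff_pos (f : MvPowerSeries ℕ ℤ) (lam : List ℕ) (clam : ℤ)
    (hlam : IsPartitionList lam) (hclam : clam ≠ 0) (c : List ℕ →₀ ℤ)
    (hsupp : ∀ μ ∈ c.support, IsPartitionList μ ∧ μ.sum = lam.sum ∧ LexLt lam μ)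
    (hf : f = clam • hProd lam + c.sum fun μ n => n • hProd μ)
    (hpos : SchurPos f) :
    0 < clam := by
  classical
  obtain ⟨d, hdsupp, hdsum⟩ := hpos
  set N := lam.sum with hN0
  set U : Finset PF := shapes N ∪ d.support.image toP with hU
  -- A-expansion over `shapes N`
  have hfA : f = ∑ φ ∈ shapes N,
      (clam * (K φ (toP lam) : ℤ) + ∑ μ ∈ c.support, c μ * (K φ (toP μ) : ℤ)) • SchP φ := by
    rw [hf, DP lam hlam]
    have hcs : (c.sum fun μ z => z • hProd μ)
        = ∑ φ ∈ shapes N, (∑ μ ∈ c.support, c μ * (K φ (toP μ) : ℤ)) • SchP φ := by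
      rw [Finsupp.sum]
      have h1 : ∀ μ ∈ c.support, c μ • hProd μ
          = ∑ φ ∈ shapes N, (c μ * (K φ (toP μ) : ℤ)) • SchP φ := by
        intro μ hμ
        obtain ⟨hp, hs, _⟩ := hsupp μ hμ
        rw [DP μ hp, hs, Finset.smul_sum]
        refine Finset.sum_congr rfl fun φ _ => ?_
        rw [smul_smul]
      rw [Finset.sum_congr rfl h1, Finset.sum_comm]
      refine Finset.sum_congr rfl fun φ _ => ?_
      rw [Finset.sum_smul]
    rw [hcs, Finset.smul_sum, ← Finset.sum_add_distrib]
    refine Finset.sum_congr rfl fun φ _ => ?_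
    rw [smul_smul, ← add_smul]
  have hAzero : ∀ φ ∈ U, φ ∉ shapes N →
      (clam * (K φ (toP lam) : ℤ) + ∑ μ ∈ c.support, c μ * (K φ (toP μ) : ℤ)) = 0 := by
    intro φ hφU hφnot
    have hφpart : IsPart φ := by
      rcases Finset.mem_union.mp hφU with h | h
      · exact (mem_shapes.mp h).1
      · obtain ⟨μ0, hμ0, rfl⟩ := Finset.mem_image.mp h
        exact isPart_toP (hdsupp μ0 hμ0)
    have h1 : K φ (toP lam) = 0 := by
      by_contra hc2
      exact hφnot (mem_shapes.mpr ⟨hφpart, by rw [← K_ne_wt hc2, wt_toP]⟩)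
    have h2 : ∀ μ ∈ c.support, c μ * (K φ (toP μ) : ℤ) = 0 := by
      intro μ hμ
      obtain ⟨hp, hs, _⟩ := hsupp μ hμ
      have hz : K φ (toP μ) = 0 := by
        by_contra hc2
        exact hφnot (mem_shapes.mpr ⟨hφpart, by rw [← K_ne_wt hc2, wt_toP, hs]⟩)
      rw [hz, Nat.cast_zero, mul_zero]
    rw [h1, Nat.cast_zero, mul_zero, zero_add]
    exact Finset.sum_eq_zero h2
  have hfA' : f = ∑ φ ∈ U,
      (clam * (K φ (toP lam) : ℤ) + ∑ μ ∈ c.support, c μ * (K φ (toP μ) : ℤ)) • SchP φ := by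
    rw [hfA]
    exact Finset.sum_subset Finset.subset_union_left
      (fun φ hφ hnot => by rw [hAzero φ hφ hnot, zero_smul])
  -- B-expansion over `U`
  have hfB : f = ∑ φ ∈ U,
      (∑ μ ∈ d.support, if toP μ = φ then (d μ : ℤ) else 0) • SchP φ := by
    rw [hdsum, Finsupp.sum]
    have h1 : ∀ μ ∈ d.support, (d μ : ℤ) • schurFn μ
        = ∑ φ ∈ U, (if toP μ = φ then (d μ : ℤ) else 0) • SchP φ := by
      intro μ hμ
      rw [schurFn_eq (hdsupp μ hμ)]
      rw [Finset.sum_eq_single (toP μ)]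
      · rw [if_pos rfl]
      · intro φ _ hne
        rw [if_neg (fun h => hne h.symm), zero_smul]
      · intro habs
        exact absurd (Finset.mem_union_right _ (Finset.mem_image_of_mem toP hμ)) habs
    rw [Finset.sum_congr rfl h1, Finset.sum_comm]
    refine Finset.sum_congr rfl fun φ _ => ?_
    rw [Finset.sum_smul]
  -- subtract the two expansions and use linear independence
  have hdiff : ∑ φ ∈ U,
      ((clam * (K φ (toP lam) : ℤ) + ∑ μ ∈ c.support, c μ * (K φ (toP μ) : ℤ))
        - (∑ μ ∈ d.support, if toP μ = φ then (d μ : ℤ) else 0)) • SchP φ = 0 := by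
    have hsplit : ∀ φ ∈ U,
        ((clam * (K φ (toP lam) : ℤ) + ∑ μ ∈ c.support, c μ * (K φ (toP μ) : ℤ))
          - (∑ μ ∈ d.support, if toP μ = φ then (d μ : ℤ) else 0)) • SchP φ
        = (clam * (K φ (toP lam) : ℤ) + ∑ μ ∈ c.support, c μ * (K φ (toP μ) : ℤ)) • SchP φ
          - (∑ μ ∈ d.support, if toP μ = φ then (d μ : ℤ) else 0) • SchP φ :=
      fun φ _ => sub_smul _ _ _
    rw [Finset.sum_congr rfl hsplit, Finset.sum_sub_distrib, ← hfA', ← hfB, sub_self]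
  have hUpart : ∀ φ ∈ U, IsPart φ := by
    intro φ hφ
    rcases Finset.mem_union.mp hφ with h | h
    · exact (mem_shapes.mp h).1
    · obtain ⟨μ0, hμ0, rfl⟩ := Finset.mem_image.mp h
      exact isPart_toP (hdsupp μ0 hμ0)
  have hmemU : toP lam ∈ U :=
    Finset.mem_union_left _ (mem_shapes.mpr ⟨isPart_toP hlam, by rw [wt_toP]⟩)
  have hz := indep U hUpart _ hdiff (toP lam) hmemU
  have hAlam : clam * (K (toP lam) (toP lam) : ℤ)
      + ∑ μ ∈ c.support, c μ * (K (toP lam) (toP μ) : ℤ) = clam := by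
    rw [K_self (isPart_toP hlam), Nat.cast_one, mul_one]
    have hzz : ∀ μ ∈ c.support, c μ * (K (toP lam) (toP μ) : ℤ) = 0 := by
      intro μ hμ
      obtain ⟨hp, hs, hlex⟩ := hsupp μ hμ
      rw [K_lex_zero hlam hp hs hlex, Nat.cast_zero, mul_zero]
    rw [Finset.sum_eq_zero hzz, add_zero]
  have hBnn : 0 ≤ ∑ μ ∈ d.support, (if toP μ = toP lam then (d μ : ℤ) else 0) :=
    Finset.sum_nonneg fun μ _ => by
      by_cases h : toP μ = toP lam <;> simp [h]
  rw [hAlam] at hz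
  omega
end
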